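/- arXiv:0907.0299 — 5 statements merged into one kernel-verified Lean document; each statement's English description precedes it below -/
import Mathlib

section
/- Let k ≥ 1, let g_1,…,g_k be real constants, and define Q : ℝ^{k+1} × ℝ^k → ℝ by Q(y,x) = exp(−Σ_{i=1}^{k} (e^{x_i − y_i} + g_i e^{y_{i+1} − x_i})). Then for all (y,x), Σ_{i=1}^{k+1} ∂²Q/∂y_i² − 2(Σ_{i=1}^{k} g_i e^{y_{i+1}−y_i}) Q = Σ_{i=1}^{k} ∂²Q/∂x_i² − 2(Σ_{i=1}^{k-1} g_i e^{x_{i+1}−x_i}) Q. Equivalently, the kernel Q intertwines the quadratic Toda Hamiltonians of gl_{k+1} and gl_k. -/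
/-- Second partial derivative of `f` along the `i`-th coordinate at the point `p`. -/
noncomputable def pd2 (f : (ℕ → ℝ) → ℝ) (i : ℕ) (p : ℕ → ℝ) : ℝ :=
  deriv (deriv (fun t => f (Function.update p i t))) (p i)

private lemma e1 (u v : ℝ) : Real.exp (u - v) = Real.exp u * Real.exp (-v) := by
  rw [sub_eq_add_neg, Real.exp_add]

private lemma deriv2_exp (C a b : ℝ) (t : ℝ) :
    deriv (deriv (fun s => Real.exp (C - a * Real.exp (-s) - b * Real.exp s))) t
      = ((a * Real.exp (-t) - b * Real.exp t) ^ 2 - (a * Real.exp (-t) + b * Real.exp t))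
        * Real.exp (C - a * Real.exp (-t) - b * Real.exp t) := by
  have hE : ∀ s : ℝ, HasDerivAt (fun s => C - a * Real.exp (-s) - b * Real.exp s)
      (a * Real.exp (-s) - b * Real.exp s) s := by
    intro s
    have h1 : HasDerivAt (fun s : ℝ => Real.exp (-s)) (-Real.exp (-s)) s := by
      simpa [Function.comp_def] using (Real.hasDerivAt_exp (-s)).comp s (hasDerivAt_neg s)
    have h2 := ((hasDerivAt_const s C).sub (h1.const_mul a)).sub
      ((Real.hasDerivAt_exp s).const_mul b)
    exact h2.congr_deriv (by ring)
  have h1 : ∀ s : ℝ, HasDerivAt (fun s => Real.exp (C - a * Real.exp (-s) - b * Real.exp s))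
      ((a * Real.exp (-s) - b * Real.exp s)
        * Real.exp (C - a * Real.exp (-s) - b * Real.exp s)) s := by
    intro s
    simpa [mul_comm, Function.comp_def] using (Real.hasDerivAt_exp _).comp s (hE s)
  have hd : deriv (fun s => Real.exp (C - a * Real.exp (-s) - b * Real.exp s))
      = fun s => (a * Real.exp (-s) - b * Real.exp s)
        * Real.exp (C - a * Real.exp (-s) - b * Real.exp s) :=
    funext fun s => (h1 s).deriv
  rw [hd]
  have hF : HasDerivAt (fun s : ℝ => a * Real.exp (-s) - b * Real.exp s)
      (-(a * Real.exp (-t)) - b * Real.exp t) t := by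
    have h1 : HasDerivAt (fun s : ℝ => Real.exp (-s)) (-Real.exp (-t)) t := by
      simpa [Function.comp_def] using (Real.hasDerivAt_exp (-t)).comp t (hasDerivAt_neg t)
    have h2 := (h1.const_mul a).sub ((Real.hasDerivAt_exp t).const_mul b)
    exact h2.congr_deriv (by ring)
  have h2 := hF.mul (h1 t)
  rw [HasDerivAt.deriv (f := fun s => (a * Real.exp (-s) - b * Real.exp s)
    * Real.exp (C - a * Real.exp (-s) - b * Real.exp s)) h2]
  ring

private lemma pd2_exp (f : (ℕ → ℝ) → ℝ) (i : ℕ) (p : ℕ → ℝ) (C a b : ℝ)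
    (h : ∀ t, f (Function.update p i t) = Real.exp (C - a * Real.exp (-t) - b * Real.exp t)) :
    pd2 f i p = ((a * Real.exp (-(p i)) - b * Real.exp (p i)) ^ 2
      - (a * Real.exp (-(p i)) + b * Real.exp (p i))) * f p := by
  have hf : f p = Real.exp (C - a * Real.exp (-(p i)) - b * Real.exp (p i)) := by
    have := h (p i); rwa [Function.update_eq_self] at this
  unfold pd2
  rw [show (fun t => f (Function.update p i t))
      = fun t => Real.exp (C - a * Real.exp (-t) - b * Real.exp t) from funext h,
    deriv2_exp, hf]

private lemma sum_Icc_one_eq_range (k : ℕ) (h : ℕ → ℝ) :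
    ∑ i ∈ Finset.Icc 1 k, h i = ∑ i ∈ Finset.range k, h (i + 1) := by
  rw [← Finset.Ico_add_one_right_eq_Icc, Finset.sum_Ico_eq_sum_range]
  apply Finset.sum_congr rfl
  intro i _
  rw [add_comm]

private lemma shift_sum (k : ℕ) (h : ℕ → ℝ) (h1 : h 1 = 0) :
    ∑ i ∈ Finset.Icc 1 (k + 1), h i = ∑ i ∈ Finset.Icc 1 k, h (i + 1) := by
  rw [sum_Icc_one_eq_range, sum_Icc_one_eq_range, Finset.sum_range_succ']
  simp [h1]

/-- `U i = e^{x_i - y_i}` for `1 ≤ i ≤ k`, else `0`. -/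
noncomputable def Uf (k : ℕ) (x y : ℕ → ℝ) (i : ℕ) : ℝ :=
  if i ≤ k then Real.exp (x i - y i) else 0

/-- `V i = g_{i-1} e^{y_i - x_{i-1}}` for `2 ≤ i ≤ k+1`, else `0`. -/
noncomputable def Vf (g x y : ℕ → ℝ) (i : ℕ) : ℝ :=
  if 2 ≤ i then g (i - 1) * Real.exp (y i - x (i - 1)) else 0

private lemma pd2_y (k : ℕ) (g x y : ℕ → ℝ) (i : ℕ) (hi : 1 ≤ i ∧ i ≤ k + 1) :
    pd2 (fun y' => Real.exp (-(∑ j ∈ Finset.Icc 1 k,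
        (Real.exp (x j - y' j) + g j * Real.exp (y' (j + 1) - x j))))) i y
      = ((Uf k x y i - Vf g x y i) ^ 2 - (Uf k x y i + Vf g x y i))
        * Real.exp (-(∑ j ∈ Finset.Icc 1 k,
            (Real.exp (x j - y j) + g j * Real.exp (y (j + 1) - x j)))) := by
  set a : ℝ := if i ≤ k then Real.exp (x i) else 0 with ha
  set b : ℝ := if 2 ≤ i then g (i - 1) * Real.exp (-(x (i - 1))) else 0 with hb
  set S : ℝ := ∑ j ∈ Finset.Icc 1 k,
      (Real.exp (x j - y j) + g j * Real.exp (y (j + 1) - x j)) with hS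
  have hterm : ∀ t : ℝ, ∀ j ∈ Finset.Icc 1 k,
      Real.exp (x j - Function.update y i t j)
          + g j * Real.exp (Function.update y i t (j + 1) - x j)
      = (Real.exp (x j - y j) + g j * Real.exp (y (j + 1) - x j))
        + ((if j = i then Real.exp (x j) * (Real.exp (-t) - Real.exp (-(y i))) else 0)
          + (if j = i - 1 then g j * Real.exp (-(x j)) * (Real.exp t - Real.exp (y i)) else 0)) := by
    intro t j hj
    rw [Finset.mem_Icc] at hj
    simp only [Function.update_apply]
    by_cases h1 : j = i
    · subst h1
      rw [if_pos rfl, if_neg (by omega : ¬ j + 1 = j), if_pos rfl,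
        if_neg (by omega : ¬ j = j - 1)]
      rw [e1 (x j) t, e1 (x j) (y j)]
      ring
    · rw [if_neg h1, if_neg h1]
      by_cases h2 : j + 1 = i
      · rw [if_pos h2, if_pos (by omega : j = i - 1), ← h2]
        rw [e1 t (x j), e1 (y (j + 1)) (x j)]
        ring
      · rw [if_neg h2, if_neg (by omega : ¬ j = i - 1)]
        ring
  have hsum : ∀ t : ℝ,
      ∑ j ∈ Finset.Icc 1 k, (Real.exp (x j - Function.update y i t j)
          + g j * Real.exp (Function.update y i t (j + 1) - x j))
      = S + (a * Real.exp (-t) - a * Real.exp (-(y i))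
          + (b * Real.exp t - b * Real.exp (y i))) := by
    intro t
    have hsplit : ∀ (F G H : ℕ → ℝ),
        ∑ j ∈ Finset.Icc 1 k, (F j + (G j + H j))
        = (∑ j ∈ Finset.Icc 1 k, F j)
          + ((∑ j ∈ Finset.Icc 1 k, G j) + (∑ j ∈ Finset.Icc 1 k, H j)) := by
      intro F G H
      rw [← Finset.sum_add_distrib, ← Finset.sum_add_distrib]
    rw [Finset.sum_congr rfl (hterm t), hsplit,
      Finset.sum_ite_eq' (Finset.Icc 1 k) i, Finset.sum_ite_eq' (Finset.Icc 1 k) (i - 1),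
      ← hS]
    simp only [Finset.mem_Icc, ha, hb]
    split_ifs <;> first | ring1 | (exfalso; omega)
  have h : ∀ t : ℝ, (fun y' => Real.exp (-(∑ j ∈ Finset.Icc 1 k,
        (Real.exp (x j - y' j) + g j * Real.exp (y' (j + 1) - x j))))) (Function.update y i t)
      = Real.exp ((-S + (a * Real.exp (-(y i)) + b * Real.exp (y i)))
          - a * Real.exp (-t) - b * Real.exp t) := by
    intro t
    beta_reduce
    rw [hsum t]
    congr 1
    ring
  rw [pd2_exp _ i y _ a b h]
  rw [← hS]
  have hUa : Uf k x y i = a * Real.exp (-(y i)) := by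
    unfold Uf
    rw [ha]
    split_ifs
    · rw [e1]
    · rw [zero_mul]
  have hVb : Vf g x y i = b * Real.exp (y i) := by
    unfold Vf
    rw [hb]
    split_ifs
    · rw [e1]; ring
    · rw [zero_mul]
  rw [hUa, hVb]

private lemma pd2_x (k : ℕ) (g x y : ℕ → ℝ) (i : ℕ) (hi : 1 ≤ i ∧ i ≤ k) :
    pd2 (fun x' => Real.exp (-(∑ j ∈ Finset.Icc 1 k,
        (Real.exp (x' j - y j) + g j * Real.exp (y (j + 1) - x' j))))) i x
      = ((Uf k x y i - Vf g x y (i + 1)) ^ 2 - (Uf k x y i + Vf g x y (i + 1)))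
        * Real.exp (-(∑ j ∈ Finset.Icc 1 k,
            (Real.exp (x j - y j) + g j * Real.exp (y (j + 1) - x j)))) := by
  set a : ℝ := g i * Real.exp (y (i + 1)) with ha
  set b : ℝ := Real.exp (-(y i)) with hb
  set S : ℝ := ∑ j ∈ Finset.Icc 1 k,
      (Real.exp (x j - y j) + g j * Real.exp (y (j + 1) - x j)) with hS
  have hterm : ∀ t : ℝ, ∀ j ∈ Finset.Icc 1 k,
      Real.exp (Function.update x i t j - y j)
          + g j * Real.exp (y (j + 1) - Function.update x i t j)
      = (Real.exp (x j - y j) + g j * Real.exp (y (j + 1) - x j))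
        + (if j = i then (g i * Real.exp (y (i + 1)) * (Real.exp (-t) - Real.exp (-(x i)))
            + Real.exp (-(y i)) * (Real.exp t - Real.exp (x i))) else 0) := by
    intro t j hj
    simp only [Function.update_apply]
    by_cases h1 : j = i
    · subst h1
      rw [if_pos rfl, if_pos rfl]
      rw [e1 t (y j), e1 (y (j + 1)) t, e1 (x j) (y j), e1 (y (j + 1)) (x j)]
      ring
    · rw [if_neg h1, if_neg h1]
      ring
  have hsum : ∀ t : ℝ,
      ∑ j ∈ Finset.Icc 1 k, (Real.exp (Function.update x i t j - y j)
          + g j * Real.exp (y (j + 1) - Function.update x i t j))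
      = S + (a * Real.exp (-t) - a * Real.exp (-(x i))
          + (b * Real.exp t - b * Real.exp (x i))) := by
    intro t
    rw [Finset.sum_congr rfl (hterm t), Finset.sum_add_distrib,
      Finset.sum_ite_eq' (Finset.Icc 1 k) i,
      if_pos (Finset.mem_Icc.mpr hi), ← hS]
    rw [ha, hb]
    ring
  have h : ∀ t : ℝ, (fun x' => Real.exp (-(∑ j ∈ Finset.Icc 1 k,
        (Real.exp (x' j - y j) + g j * Real.exp (y (j + 1) - x' j))))) (Function.update x i t)
      = Real.exp ((-S + (a * Real.exp (-(x i)) + b * Real.exp (x i)))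
          - a * Real.exp (-t) - b * Real.exp t) := by
    intro t
    beta_reduce
    rw [hsum t]
    congr 1
    ring
  rw [pd2_exp _ i x _ a b h]
  rw [← hS]
  have hUb : Uf k x y i = b * Real.exp (x i) := by
    unfold Uf
    rw [if_pos hi.2, hb, e1]
    ring
  have hVa : Vf g x y (i + 1) = a * Real.exp (-(x i)) := by
    unfold Vf
    rw [if_pos (by omega : 2 ≤ i + 1), ha]
    simp only [Nat.add_sub_cancel]
    rw [e1]
    ring
  rw [hUb, hVa]
  ring

private lemma exp_mul_aux (c A B D : ℝ) (h : A + B = D) :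
    Real.exp A * (c * Real.exp B) = c * Real.exp D := by
  rw [← h, Real.exp_add]; ring

private lemma key_identity (k : ℕ) (hk : 1 ≤ k) (g x y : ℕ → ℝ) :
    (∑ i ∈ Finset.Icc 1 (k + 1),
        ((Uf k x y i - Vf g x y i) ^ 2 - (Uf k x y i + Vf g x y i)))
      - 2 * ∑ i ∈ Finset.Icc 1 k, g i * Real.exp (y (i + 1) - y i)
    = (∑ i ∈ Finset.Icc 1 k,
        ((Uf k x y i - Vf g x y (i + 1)) ^ 2 - (Uf k x y i + Vf g x y (i + 1))))
      - 2 * ∑ i ∈ Finset.Icc 1 (k - 1), g i * Real.exp (x (i + 1) - x i) := by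
  obtain ⟨m, rfl⟩ : ∃ m, k = m + 1 := ⟨k - 1, by omega⟩
  simp only [Nat.add_sub_cancel]
  have hU_top : Uf (m + 1) x y (m + 1 + 1) = 0 := if_neg (by omega)
  have hV_one : Vf g x y 1 = 0 := if_neg (by omega)
  have e_left : ∑ i ∈ Finset.Icc 1 (m + 1 + 1),
      ((Uf (m + 1) x y i - Vf g x y i) ^ 2 - (Uf (m + 1) x y i + Vf g x y i))
      = (∑ i ∈ Finset.Icc 1 (m + 1 + 1), (Uf (m + 1) x y i ^ 2 - Uf (m + 1) x y i))
        + (∑ i ∈ Finset.Icc 1 (m + 1 + 1), (Vf g x y i ^ 2 - Vf g x y i))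
        - 2 * ∑ i ∈ Finset.Icc 1 (m + 1 + 1), Uf (m + 1) x y i * Vf g x y i := by
    rw [Finset.mul_sum, ← Finset.sum_add_distrib, ← Finset.sum_sub_distrib]
    exact Finset.sum_congr rfl fun i _ => by ring
  have e_right : ∑ i ∈ Finset.Icc 1 (m + 1),
      ((Uf (m + 1) x y i - Vf g x y (i + 1)) ^ 2 - (Uf (m + 1) x y i + Vf g x y (i + 1)))
      = (∑ i ∈ Finset.Icc 1 (m + 1), (Uf (m + 1) x y i ^ 2 - Uf (m + 1) x y i))
        + (∑ i ∈ Finset.Icc 1 (m + 1), (Vf g x y (i + 1) ^ 2 - Vf g x y (i + 1)))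
        - 2 * ∑ i ∈ Finset.Icc 1 (m + 1), Uf (m + 1) x y i * Vf g x y (i + 1) := by
    rw [Finset.mul_sum, ← Finset.sum_add_distrib, ← Finset.sum_sub_distrib]
    exact Finset.sum_congr rfl fun i _ => by ring
  have A1 : ∑ i ∈ Finset.Icc 1 (m + 1 + 1), (Uf (m + 1) x y i ^ 2 - Uf (m + 1) x y i)
      = ∑ i ∈ Finset.Icc 1 (m + 1), (Uf (m + 1) x y i ^ 2 - Uf (m + 1) x y i) := by
    rw [Finset.sum_Icc_succ_top (by omega : 1 ≤ m + 1 + 1), hU_top]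
    ring
  have A2 : ∑ i ∈ Finset.Icc 1 (m + 1 + 1), (Vf g x y i ^ 2 - Vf g x y i)
      = ∑ i ∈ Finset.Icc 1 (m + 1), (Vf g x y (i + 1) ^ 2 - Vf g x y (i + 1)) :=
    shift_sum (m + 1) _ (by rw [hV_one]; ring)
  have A3 : ∑ i ∈ Finset.Icc 1 (m + 1 + 1), Uf (m + 1) x y i * Vf g x y i
      = ∑ i ∈ Finset.Icc 1 m, g i * Real.exp (x (i + 1) - x i) := by
    rw [shift_sum (m + 1) _ (by rw [hV_one]; ring),
      Finset.sum_Icc_succ_top (by omega : 1 ≤ m + 1), hU_top, zero_mul, add_zero]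
    apply Finset.sum_congr rfl
    intro i hi
    rw [Finset.mem_Icc] at hi
    unfold Uf Vf
    rw [if_pos (by omega : i + 1 ≤ m + 1), if_pos (by omega : 2 ≤ i + 1)]
    simp only [Nat.add_sub_cancel]
    exact exp_mul_aux _ _ _ _ (by ring)
  have A4 : ∑ i ∈ Finset.Icc 1 (m + 1), Uf (m + 1) x y i * Vf g x y (i + 1)
      = ∑ i ∈ Finset.Icc 1 (m + 1), g i * Real.exp (y (i + 1) - y i) := by
    apply Finset.sum_congr rfl
    intro i hi
    rw [Finset.mem_Icc] at hi
    unfold Uf Vf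
    rw [if_pos hi.2, if_pos (by omega : 2 ≤ i + 1)]
    simp only [Nat.add_sub_cancel]
    exact exp_mul_aux _ _ _ _ (by ring)
  rw [e_left, e_right, A1, A2, A3, A4]
  ring

/-- The kernel `Q(y,x) = exp(−Σ_{i=1}^{k} (e^{x_i − y_i} + g_i e^{y_{i+1} − x_i}))`
intertwines the quadratic open Toda Hamiltonians of `gl_{k+1}` and `gl_k`. -/
theorem stmt_0 (k : ℕ) (hk : 1 ≤ k) (g : ℕ → ℝ) :
    let Q : (ℕ → ℝ) → (ℕ → ℝ) → ℝ := fun y x =>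
      Real.exp (-(∑ i ∈ Finset.Icc 1 k,
        (Real.exp (x i - y i) + g i * Real.exp (y (i + 1) - x i))))
    ∀ y x : ℕ → ℝ,
      (∑ i ∈ Finset.Icc 1 (k + 1), pd2 (fun y' => Q y' x) i y)
          - 2 * (∑ i ∈ Finset.Icc 1 k, g i * Real.exp (y (i + 1) - y i)) * Q y x
        = (∑ i ∈ Finset.Icc 1 k, pd2 (fun x' => Q y x') i x)
          - 2 * (∑ i ∈ Finset.Icc 1 (k - 1), g i * Real.exp (x (i + 1) - x i)) * Q y x := by
  intro Q y x
  show (∑ i ∈ Finset.Icc 1 (k + 1), pd2 (fun y' => Real.exp (-(∑ j ∈ Finset.Icc 1 k,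
        (Real.exp (x j - y' j) + g j * Real.exp (y' (j + 1) - x j))))) i y)
      - 2 * (∑ i ∈ Finset.Icc 1 k, g i * Real.exp (y (i + 1) - y i))
        * Real.exp (-(∑ j ∈ Finset.Icc 1 k,
            (Real.exp (x j - y j) + g j * Real.exp (y (j + 1) - x j))))
    = (∑ i ∈ Finset.Icc 1 k, pd2 (fun x' => Real.exp (-(∑ j ∈ Finset.Icc 1 k,
        (Real.exp (x' j - y j) + g j * Real.exp (y (j + 1) - x' j))))) i x)
      - 2 * (∑ i ∈ Finset.Icc 1 (k - 1), g i * Real.exp (x (i + 1) - x i))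
        * Real.exp (-(∑ j ∈ Finset.Icc 1 k,
            (Real.exp (x j - y j) + g j * Real.exp (y (j + 1) - x j))))
  rw [Finset.sum_congr rfl (fun i hi => pd2_y k g x y i (Finset.mem_Icc.mp hi)),
    Finset.sum_congr rfl (fun i hi => pd2_x k g x y i (Finset.mem_Icc.mp hi)),
    ← Finset.sum_mul, ← Finset.sum_mul]
  linear_combination Real.exp (-(∑ j ∈ Finset.Icc 1 k,
      (Real.exp (x j - y j) + g j * Real.exp (y (j + 1) - x j)))) * key_identity k hk g x y
end

section
/- Let n ≥ 2, let g_1,…,g_n be real constants, and define Q : ℝ^n × ℝ^n → ℝ by Q(x,y) = exp(−Σ_{i=1}^{n} (e^{x_i − y_i} + g_i e^{y_{i+1} − x_i})), where indices are taken cyclically, i.e. y_{n+1} := y_1. Then for all (x,y): (−(1/2) Σ_{i=1}^n ∂²/∂x_i² + Σ_{i=1}^n g_i e^{x_{i+1}−x_i}) Q(x,y) = (−(1/2) Σ_{i=1}^n ∂²/∂y_i² + Σ_{i=1}^n g_i e^{y_{i+1}−y_i}) Q(x,y), with x_{n+1} := x_1. -/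
namespace PGaux

open Real Finset Function

/-- cyclic successor on `[1,n]` -/
def sig (n i : ℕ) : ℕ := if i = n then 1 else i + 1
/-- cyclic predecessor on `[1,n]` -/
def pre (n j : ℕ) : ℕ := if j = 1 then n else j - 1

lemma sig_mem {n i : ℕ} (hn : 2 ≤ n) (h : i ∈ Icc 1 n) : sig n i ∈ Icc 1 n := by
  simp only [mem_Icc] at *; unfold sig; split <;> omega
lemma pre_mem {n j : ℕ} (hn : 2 ≤ n) (h : j ∈ Icc 1 n) : pre n j ∈ Icc 1 n := by
  simp only [mem_Icc] at *; unfold pre; split <;> omega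
lemma pre_sig {n i : ℕ} (hn : 2 ≤ n) (h : i ∈ Icc 1 n) : pre n (sig n i) = i := by
  simp only [mem_Icc] at h; unfold sig pre; split <;> split <;> omega
lemma sig_pre {n j : ℕ} (hn : 2 ≤ n) (h : j ∈ Icc 1 n) : sig n (pre n j) = j := by
  simp only [mem_Icc] at h; unfold sig pre; split <;> split <;> omega

/-- reindexing along the cyclic shift -/
lemma sum_shift {n : ℕ} (hn : 2 ≤ n) (G : ℕ → ℕ → ℝ) :
    ∑ i ∈ Icc 1 n, G i (sig n i) = ∑ j ∈ Icc 1 n, G (pre n j) j := by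
  refine Finset.sum_nbij' (sig n) (pre n) (fun a ha => sig_mem hn ha)
    (fun a ha => pre_mem hn ha) (fun a ha => pre_sig hn ha) (fun a ha => sig_pre hn ha)
    (fun a ha => by rw [pre_sig hn ha])

/-- splitting off the top term -/
lemma sum_split {n : ℕ} (hn : 2 ≤ n) (F : ℕ → ℝ) :
    ∑ i ∈ Icc 1 n, F i = (∑ i ∈ Icc 1 (n - 1), F i) + F n := by
  obtain ⟨m, rfl⟩ : ∃ m, n = m + 1 := ⟨n - 1, by omega⟩
  simpa using Finset.sum_Icc_succ_top (by omega : 1 ≤ m + 1) F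

/-- the original `S` equals the cyclically-written sum -/
lemma S_eq {n : ℕ} (hn : 2 ≤ n) (g x y : ℕ → ℝ) :
    (∑ i ∈ Icc 1 (n - 1), (Real.exp (x i - y i) + g i * Real.exp (y (i + 1) - x i)))
      + Real.exp (x n - y n) + g n * Real.exp (y 1 - x n)
    = ∑ i ∈ Icc 1 n, (Real.exp (x i - y i) + g i * Real.exp (y (sig n i) - x i)) := by
  rw [sum_split hn]
  have h1 : sig n n = 1 := by simp [sig]
  rw [h1, add_assoc]
  congr 1
  refine Finset.sum_congr rfl fun i hi => ?_
  simp only [mem_Icc] at hi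
  have : sig n i = i + 1 := by unfold sig; split <;> omega
  rw [this]

/-- rewriting the cyclic sum in predecessor form -/
lemma S_eq' {n : ℕ} (hn : 2 ≤ n) (g x y : ℕ → ℝ) :
    ∑ i ∈ Icc 1 n, (Real.exp (x i - y i) + g i * Real.exp (y (sig n i) - x i))
    = ∑ j ∈ Icc 1 n, (Real.exp (x j - y j) + g (pre n j) * Real.exp (y j - x (pre n j))) := by
  rw [Finset.sum_add_distrib, Finset.sum_add_distrib]
  congr 1
  exact sum_shift hn (fun a b => g a * Real.exp (y b - x a))

/-- cyclic potential sum -/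
lemma split_cyc {n : ℕ} (hn : 2 ≤ n) (g z : ℕ → ℝ) :
    (∑ i ∈ Icc 1 (n - 1), g i * Real.exp (z (i + 1) - z i)) + g n * Real.exp (z 1 - z n)
    = ∑ i ∈ Icc 1 n, g i * Real.exp (z (sig n i) - z i) := by
  rw [sum_split hn]
  have h1 : sig n n = 1 := by simp [sig]
  rw [h1]
  congr 1
  refine Finset.sum_congr rfl fun i hi => ?_
  simp only [mem_Icc] at hi
  have : sig n i = i + 1 := by unfold sig; split <;> omega
  rw [this]

lemma ab1 (a b : ℝ) : Real.exp (-b) * Real.exp a = Real.exp (a - b) := by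
  rw [← Real.exp_add, neg_add_eq_sub]
lemma ab2 (c a b : ℝ) : c * Real.exp b * Real.exp (-a) = c * Real.exp (b - a) := by
  rw [mul_assoc, ← Real.exp_add, ← sub_eq_add_neg]
lemma ab3 (c a b : ℝ) : c * Real.exp (-a) * Real.exp b = c * Real.exp (b - a) := by
  rw [mul_assoc, ← Real.exp_add, neg_add_eq_sub]
lemma ab4 (a b : ℝ) : Real.exp a * Real.exp (-b) = Real.exp (a - b) := by
  rw [← Real.exp_add, ← sub_eq_add_neg]
lemma ab5 (c a b : ℝ) : Real.exp a * (c * Real.exp b) = c * Real.exp (a + b) := by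
  rw [Real.exp_add]; ring

lemma PGhas (a b c : ℝ) (s : ℝ) :
    HasDerivAt (fun s => Real.exp (-(a * Real.exp s + b * Real.exp (-s) + c)))
      (-(a * Real.exp s - b * Real.exp (-s))
        * Real.exp (-(a * Real.exp s + b * Real.exp (-s) + c))) s := by
  have hne : HasDerivAt (fun s : ℝ => Real.exp (-s)) (-Real.exp (-s)) s := by
    simpa using (hasDerivAt_neg s).exp
  have hE : HasDerivAt (fun s => -(a * Real.exp s + b * Real.exp (-s) + c))
      (-(a * Real.exp s - b * Real.exp (-s))) s := by
    have := (((Real.hasDerivAt_exp s).const_mul a).add (hne.const_mul b)).add_const c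
    exact this.neg.congr_deriv (by ring)
  simpa [mul_comm] using hE.exp

lemma PGkey (a b c t : ℝ) :
    deriv (deriv (fun s => Real.exp (-(a * Real.exp s + b * Real.exp (-s) + c)))) t
    = ((a * Real.exp t - b * Real.exp (-t))^2 - (a * Real.exp t + b * Real.exp (-t)))
        * Real.exp (-(a * Real.exp t + b * Real.exp (-t) + c)) := by
  have hd : deriv (fun s => Real.exp (-(a * Real.exp s + b * Real.exp (-s) + c)))
      = fun s => -(a * Real.exp s - b * Real.exp (-s))
          * Real.exp (-(a * Real.exp s + b * Real.exp (-s) + c)) :=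
    funext fun s => (PGhas a b c s).deriv
  rw [hd]
  have hne : HasDerivAt (fun s : ℝ => Real.exp (-s)) (-Real.exp (-t)) t := by
    simpa using (hasDerivAt_neg t).exp
  have h1 : HasDerivAt (fun s => -(a * Real.exp s - b * Real.exp (-s)))
      (-(a * Real.exp t + b * Real.exp (-t))) t := by
    have := (((Real.hasDerivAt_exp t).const_mul a).sub (hne.const_mul b)).neg
    exact this.congr_deriv (by ring)
  have h2 : HasDerivAt (fun s => -(a * Real.exp s - b * Real.exp (-s))
      * Real.exp (-(a * Real.exp s + b * Real.exp (-s) + c))) _ t := h1.mul (PGhas a b c t)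
  rw [h2.deriv]; ring

/-- second coordinate derivative of `exp(-(∑ (A_j e^{q_j} + B_j e^{-q_j})))` -/
lemma pd2_gen (n : ℕ) (A B : ℕ → ℝ) {i : ℕ} (hi : i ∈ Icc 1 n) (p : ℕ → ℝ) :
    pd2 (fun q => Real.exp (-(∑ j ∈ Icc 1 n,
        (A j * Real.exp (q j) + B j * Real.exp (-q j))))) i p
    = ((A i * Real.exp (p i) - B i * Real.exp (-p i))^2
        - (A i * Real.exp (p i) + B i * Real.exp (-p i)))
      * Real.exp (-(∑ j ∈ Icc 1 n, (A j * Real.exp (p j) + B j * Real.exp (-p j)))) := by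
  have hc : ∀ t : ℝ, ∑ j ∈ Icc 1 n,
        (A j * Real.exp (Function.update p i t j) + B j * Real.exp (-Function.update p i t j))
      = A i * Real.exp t + B i * Real.exp (-t)
        + ∑ j ∈ (Icc 1 n).erase i, (A j * Real.exp (p j) + B j * Real.exp (-p j)) := by
    intro t
    rw [← Finset.add_sum_erase _ _ hi, Function.update_self]
    congr 1
    refine Finset.sum_congr rfl fun j hj => ?_
    rw [Function.update_of_ne (Finset.ne_of_mem_erase hj)]
  have hfun : (fun t => Real.exp (-(∑ j ∈ Icc 1 n,
        (A j * Real.exp (Function.update p i t j) + B j * Real.exp (-Function.update p i t j)))))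
      = fun t => Real.exp (-(A i * Real.exp t + B i * Real.exp (-t)
          + ∑ j ∈ (Icc 1 n).erase i, (A j * Real.exp (p j) + B j * Real.exp (-p j)))) :=
    funext fun t => by rw [hc t]
  show deriv (deriv (fun t => Real.exp (-(∑ j ∈ Icc 1 n,
      (A j * Real.exp (Function.update p i t j)
        + B j * Real.exp (-Function.update p i t j)))))) (p i) = _
  rw [hfun, PGkey]
  have h := hc (p i)
  rw [Function.update_eq_self] at h
  rw [← h]

end PGaux

open Real Finset Function PGaux in
theorem PGmain (n : ℕ) (hn : 2 ≤ n) (g x y : ℕ → ℝ) :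
      -(1 / 2) * (∑ i ∈ Finset.Icc 1 n, pd2 (fun x' => Real.exp (-((∑ i ∈ Finset.Icc 1 (n - 1),
          (Real.exp (x' i - y i) + g i * Real.exp (y (i + 1) - x' i)))
        + Real.exp (x' n - y n) + g n * Real.exp (y 1 - x' n)))) i x)
          + ((∑ i ∈ Finset.Icc 1 (n - 1), g i * Real.exp (x (i + 1) - x i))
              + g n * Real.exp (x 1 - x n)) * Real.exp (-((∑ i ∈ Finset.Icc 1 (n - 1),
          (Real.exp (x i - y i) + g i * Real.exp (y (i + 1) - x i)))
        + Real.exp (x n - y n) + g n * Real.exp (y 1 - x n)))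
        = -(1 / 2) * (∑ i ∈ Finset.Icc 1 n, pd2 (fun y' => Real.exp (-((∑ i ∈ Finset.Icc 1 (n - 1),
          (Real.exp (x i - y' i) + g i * Real.exp (y' (i + 1) - x i)))
        + Real.exp (x n - y' n) + g n * Real.exp (y' 1 - x n)))) i y)
          + ((∑ i ∈ Finset.Icc 1 (n - 1), g i * Real.exp (y (i + 1) - y i))
              + g n * Real.exp (y 1 - y n)) * Real.exp (-((∑ i ∈ Finset.Icc 1 (n - 1),
          (Real.exp (x i - y i) + g i * Real.exp (y (i + 1) - x i)))
        + Real.exp (x n - y n) + g n * Real.exp (y 1 - x n))) := by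
  -- abbreviations (written out fully in the statements below)
  have hfunx : (fun x' : ℕ → ℝ => Real.exp (-((∑ i ∈ Finset.Icc 1 (n - 1),
          (Real.exp (x' i - y i) + g i * Real.exp (y (i + 1) - x' i)))
        + Real.exp (x' n - y n) + g n * Real.exp (y 1 - x' n))))
      = fun q : ℕ → ℝ => Real.exp (-(∑ j ∈ Icc 1 n,
          (Real.exp (-y j) * Real.exp (q j)
            + g j * Real.exp (y (sig n j)) * Real.exp (-q j)))) := by
    funext x'
    congr 1
    rw [S_eq hn g x' y]
    congr 1
    refine Finset.sum_congr rfl fun j _ => ?_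
    rw [ab1, ab2]
  have hfuny : (fun y' : ℕ → ℝ => Real.exp (-((∑ i ∈ Finset.Icc 1 (n - 1),
          (Real.exp (x i - y' i) + g i * Real.exp (y' (i + 1) - x i)))
        + Real.exp (x n - y' n) + g n * Real.exp (y' 1 - x n))))
      = fun q : ℕ → ℝ => Real.exp (-(∑ j ∈ Icc 1 n,
          (g (pre n j) * Real.exp (-x (pre n j)) * Real.exp (q j)
            + Real.exp (x j) * Real.exp (-q j)))) := by
    funext y'
    congr 1
    rw [S_eq hn g x y', S_eq' hn g x y']
    congr 1
    refine Finset.sum_congr rfl fun j _ => ?_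
    rw [ab3, ab4, add_comm]
  -- the x-side second-derivative sum
  have hsumx : (∑ i ∈ Finset.Icc 1 n, pd2 (fun x' => Real.exp (-((∑ i ∈ Finset.Icc 1 (n - 1),
          (Real.exp (x' i - y i) + g i * Real.exp (y (i + 1) - x' i)))
        + Real.exp (x' n - y n) + g n * Real.exp (y 1 - x' n)))) i x)
      = (∑ i ∈ Icc 1 n,
          ((Real.exp (x i - y i) - g i * Real.exp (y (sig n i) - x i))^2
            - (Real.exp (x i - y i) + g i * Real.exp (y (sig n i) - x i))))
        * Real.exp (-(∑ j ∈ Icc 1 n,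
            (Real.exp (x j - y j) + g j * Real.exp (y (sig n j) - x j)))) := by
    rw [Finset.sum_mul]
    refine Finset.sum_congr rfl fun i hi => ?_
    rw [hfunx]
    have h := pd2_gen n (fun j => Real.exp (-y j)) (fun j => g j * Real.exp (y (sig n j))) hi x
    beta_reduce at h
    rw [h, ab1, ab2]
    have e3 : (∑ j ∈ Icc 1 n, (Real.exp (-y j) * Real.exp (x j)
          + g j * Real.exp (y (sig n j)) * Real.exp (-x j)))
        = ∑ j ∈ Icc 1 n, (Real.exp (x j - y j) + g j * Real.exp (y (sig n j) - x j)) :=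
      Finset.sum_congr rfl fun j _ => by rw [ab1, ab2]
    rw [e3]
  -- the y-side second-derivative sum
  have hsumy : (∑ i ∈ Finset.Icc 1 n, pd2 (fun y' => Real.exp (-((∑ i ∈ Finset.Icc 1 (n - 1),
          (Real.exp (x i - y' i) + g i * Real.exp (y' (i + 1) - x i)))
        + Real.exp (x n - y' n) + g n * Real.exp (y' 1 - x n)))) i y)
      = (∑ i ∈ Icc 1 n,
          ((g (pre n i) * Real.exp (y i - x (pre n i)) - Real.exp (x i - y i))^2
            - (g (pre n i) * Real.exp (y i - x (pre n i)) + Real.exp (x i - y i))))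
        * Real.exp (-(∑ j ∈ Icc 1 n,
            (Real.exp (x j - y j) + g j * Real.exp (y (sig n j) - x j)))) := by
    rw [Finset.sum_mul]
    refine Finset.sum_congr rfl fun i hi => ?_
    rw [hfuny]
    have h := pd2_gen n (fun j => g (pre n j) * Real.exp (-x (pre n j)))
      (fun j => Real.exp (x j)) hi y
    beta_reduce at h
    rw [h, ab3, ab4]
    have e4 : (∑ j ∈ Icc 1 n, (g (pre n j) * Real.exp (-x (pre n j)) * Real.exp (y j)
          + Real.exp (x j) * Real.exp (-y j)))
        = ∑ j ∈ Icc 1 n, (Real.exp (x j - y j) + g j * Real.exp (y (sig n j) - x j)) := by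
      refine Eq.trans (Finset.sum_congr rfl fun j _ => ?_) (S_eq' hn g x y).symm
      rw [ab3, ab4]
      exact add_comm _ _
    rw [e4]
  rw [hsumx, hsumy, S_eq hn g x y]
  -- the sum identities
  have h1 : ∑ i ∈ Icc 1 n, g i * Real.exp (y (sig n i) - x i)
      = ∑ j ∈ Icc 1 n, g (pre n j) * Real.exp (y j - x (pre n j)) := by
    have := sum_shift hn (fun a b => g a * Real.exp (y b - x a))
    beta_reduce at this; exact this
  have h2 : ∑ i ∈ Icc 1 n, (g i * Real.exp (y (sig n i) - x i))^2
      = ∑ j ∈ Icc 1 n, (g (pre n j) * Real.exp (y j - x (pre n j)))^2 := by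
    have := sum_shift hn (fun a b => (g a * Real.exp (y b - x a))^2)
    beta_reduce at this; exact this
  have h3 : ∑ i ∈ Icc 1 n, Real.exp (x i - y i) * (g i * Real.exp (y (sig n i) - x i))
      = (∑ i ∈ Finset.Icc 1 (n - 1), g i * Real.exp (y (i + 1) - y i))
          + g n * Real.exp (y 1 - y n) := by
    rw [split_cyc hn g y]
    refine Finset.sum_congr rfl fun i _ => ?_
    rw [ab5, show x i - y i + (y (sig n i) - x i) = y (sig n i) - y i from by ring]
  have h4 : ∑ i ∈ Icc 1 n, Real.exp (x i - y i) * (g (pre n i) * Real.exp (y i - x (pre n i)))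
      = (∑ i ∈ Finset.Icc 1 (n - 1), g i * Real.exp (x (i + 1) - x i))
          + g n * Real.exp (x 1 - x n) := by
    have e : ∑ i ∈ Icc 1 n, Real.exp (x i - y i) * (g (pre n i) * Real.exp (y i - x (pre n i)))
        = ∑ i ∈ Icc 1 n, g (pre n i) * Real.exp (x i - x (pre n i)) := by
      refine Finset.sum_congr rfl fun i _ => ?_
      rw [ab5, show x i - y i + (y i - x (pre n i)) = x i - x (pre n i) from by ring]
    have e2 := sum_shift hn (fun a b => g a * Real.exp (x b - x a))
    beta_reduce at e2
    rw [e, ← e2, split_cyc hn g x]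
  -- the main algebraic identity
  have key : (∑ i ∈ Icc 1 n,
        ((Real.exp (x i - y i) - g i * Real.exp (y (sig n i) - x i))^2
          - (Real.exp (x i - y i) + g i * Real.exp (y (sig n i) - x i))))
      - (∑ i ∈ Icc 1 n,
        ((g (pre n i) * Real.exp (y i - x (pre n i)) - Real.exp (x i - y i))^2
          - (g (pre n i) * Real.exp (y i - x (pre n i)) + Real.exp (x i - y i))))
      = 2 * ((∑ i ∈ Finset.Icc 1 (n - 1), g i * Real.exp (x (i + 1) - x i))
          + g n * Real.exp (x 1 - x n))
        - 2 * ((∑ i ∈ Finset.Icc 1 (n - 1), g i * Real.exp (y (i + 1) - y i))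
          + g n * Real.exp (y 1 - y n)) := by
    rw [← Finset.sum_sub_distrib]
    have step : ∀ i ∈ Icc 1 n,
        ((Real.exp (x i - y i) - g i * Real.exp (y (sig n i) - x i))^2
          - (Real.exp (x i - y i) + g i * Real.exp (y (sig n i) - x i)))
        - ((g (pre n i) * Real.exp (y i - x (pre n i)) - Real.exp (x i - y i))^2
          - (g (pre n i) * Real.exp (y i - x (pre n i)) + Real.exp (x i - y i)))
        = ((g i * Real.exp (y (sig n i) - x i))^2
            - (g (pre n i) * Real.exp (y i - x (pre n i)))^2)
          + (g (pre n i) * Real.exp (y i - x (pre n i)) - g i * Real.exp (y (sig n i) - x i))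
          + (2 * (Real.exp (x i - y i) * (g (pre n i) * Real.exp (y i - x (pre n i))))
            - 2 * (Real.exp (x i - y i) * (g i * Real.exp (y (sig n i) - x i)))) :=
      fun i _ => by ring
    rw [Finset.sum_congr rfl step, Finset.sum_add_distrib, Finset.sum_add_distrib,
      Finset.sum_sub_distrib, Finset.sum_sub_distrib, Finset.sum_sub_distrib,
      ← Finset.mul_sum, ← Finset.mul_sum, h1, h2, h3, h4]
    ring
  linear_combination (-(1 / 2) * Real.exp (-(∑ j ∈ Icc 1 n,
      (Real.exp (x j - y j) + g j * Real.exp (y (sig n j) - x j))))) * key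

/-- Pasquier–Gaudin commutation identity for the `Q`-operator of the closed (affine)
`gl_n` Toda chain: the kernel `Q(x,y) = exp(−Σ_{i=1}^{n}(e^{x_i−y_i} + g_i e^{y_{i+1}−x_i}))`
(indices cyclic, `y_{n+1} := y_1`, `x_{n+1} := x_1`) intertwines the periodic quadratic
Hamiltonian with itself. -/
theorem stmt_1 (n : ℕ) (hn : 2 ≤ n) (g : ℕ → ℝ) :
    let Q : (ℕ → ℝ) → (ℕ → ℝ) → ℝ := fun x y =>
      Real.exp (-((∑ i ∈ Finset.Icc 1 (n - 1),
          (Real.exp (x i - y i) + g i * Real.exp (y (i + 1) - x i)))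
        + Real.exp (x n - y n) + g n * Real.exp (y 1 - x n)))
    ∀ x y : ℕ → ℝ,
      -(1 / 2) * (∑ i ∈ Finset.Icc 1 n, pd2 (fun x' => Q x' y) i x)
          + ((∑ i ∈ Finset.Icc 1 (n - 1), g i * Real.exp (x (i + 1) - x i))
              + g n * Real.exp (x 1 - x n)) * Q x y
        = -(1 / 2) * (∑ i ∈ Finset.Icc 1 n, pd2 (fun y' => Q x y') i y)
          + ((∑ i ∈ Finset.Icc 1 (n - 1), g i * Real.exp (y (i + 1) - y i))
              + g n * Real.exp (y 1 - y n)) * Q x y := by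
  intro Q x y
  exact PGmain n hn g x y
end

section
/- Let n ≥ 2 and g_1,…,g_n ∈ ℝ. Define Q : ℝ^n × ℝ^{n−1} → ℝ by Q(z,x) = exp(−(g_1 e^{z_1} + Σ_{i=1}^{n−1} (e^{x_i − z_i} + g_{i+1} e^{z_{i+1} − x_i}))). Then for all (z,x): (−(1/2) Σ_{i=1}^n ∂²/∂z_i² − (g_1/2) e^{z_1} + (g_1²/2) e^{2z_1} + Σ_{i=1}^{n−1} g_{i+1} e^{z_{i+1}−z_i}) Q = (−(1/2) Σ_{i=1}^{n−1} ∂²/∂x_i² + g_1 e^{x_1} + Σ_{i=1}^{n−2} g_{i+1} e^{x_{i+1}−x_i}) Q. -/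
open Real Finset

lemma exp_sub' (p q : ℝ) : Real.exp (p - q) = Real.exp p * Real.exp (-q) := by
  rw [Real.exp_sub, Real.exp_neg, div_eq_mul_inv]

lemma hasDerivAt_aux (A B C t : ℝ) :
    HasDerivAt (fun s => Real.exp (-(A + B * Real.exp s + C * Real.exp (-s))))
      (-(B * Real.exp t - C * Real.exp (-t)) *
        Real.exp (-(A + B * Real.exp t + C * Real.exp (-t)))) t := by
  have hb : HasDerivAt (fun s : ℝ => B * Real.exp s) (B * Real.exp t) t :=
    (Real.hasDerivAt_exp t).const_mul B
  have hc : HasDerivAt (fun s : ℝ => C * Real.exp (-s)) (C * (Real.exp (-t) * (-1))) t := by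
    have h0 : HasDerivAt (fun s : ℝ => Real.exp (-s)) (Real.exp (-t) * (-1)) t :=
      (Real.hasDerivAt_exp (-t)).comp t (hasDerivAt_neg t)
    exact h0.const_mul C
  have h1 : HasDerivAt (fun s : ℝ => -(A + B * Real.exp s + C * Real.exp (-s)))
      (-(B * Real.exp t - C * Real.exp (-t))) t := by
    have := (((hb.const_add A).add hc)).neg
    exact this.congr_deriv (by ring)
  have h2 := h1.exp
  convert h2 using 1
  ring

lemma deriv2_aux (A B C t : ℝ) :
    deriv (deriv (fun s => Real.exp (-(A + B * Real.exp s + C * Real.exp (-s))))) t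
      = ((B * Real.exp t - C * Real.exp (-t)) ^ 2 - (B * Real.exp t + C * Real.exp (-t)))
          * Real.exp (-(A + B * Real.exp t + C * Real.exp (-t))) := by
  have hd : deriv (fun s => Real.exp (-(A + B * Real.exp s + C * Real.exp (-s))))
      = fun s => -(B * Real.exp s - C * Real.exp (-s)) *
          Real.exp (-(A + B * Real.exp s + C * Real.exp (-s))) :=
    funext fun s => (hasDerivAt_aux A B C s).deriv
  rw [hd]
  have hg : HasDerivAt (fun s : ℝ => -(B * Real.exp s - C * Real.exp (-s)))
      (-(B * Real.exp t + C * Real.exp (-t))) t := by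
    have hb : HasDerivAt (fun s : ℝ => B * Real.exp s) (B * Real.exp t) t :=
      (Real.hasDerivAt_exp t).const_mul B
    have hc : HasDerivAt (fun s : ℝ => C * Real.exp (-s)) (C * (Real.exp (-t) * (-1))) t := by
      have h0 : HasDerivAt (fun s : ℝ => Real.exp (-s)) (Real.exp (-t) * (-1)) t :=
        (Real.hasDerivAt_exp (-t)).comp t (hasDerivAt_neg t)
      exact h0.const_mul C
    have := (hb.sub hc).neg
    exact this.congr_deriv (by ring)
  have h := hg.mul (hasDerivAt_aux A B C t)
  refine h.deriv.trans ?_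
  ring

lemma pd2_of_form (f : (ℕ → ℝ) → ℝ) (k : ℕ) (p : ℕ → ℝ) (A B C : ℝ)
    (h : (fun t => f (Function.update p k t))
      = fun t => Real.exp (-(A + B * Real.exp t + C * Real.exp (-t)))) :
    pd2 f k p = ((B * Real.exp (p k) - C * Real.exp (-(p k))) ^ 2
        - (B * Real.exp (p k) + C * Real.exp (-(p k))))
      * Real.exp (-(A + B * Real.exp (p k) + C * Real.exp (-(p k)))) := by
  rw [pd2, h, deriv2_aux]

lemma zform (n : ℕ) (g z x : ℕ → ℝ) (k : ℕ) (hk1 : 1 ≤ k) (hk2 : k ≤ n) :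
    (fun t => Real.exp (-(g 1 * Real.exp (Function.update z k t 1) +
        ∑ i ∈ Icc 1 (n-1), (Real.exp (x i - Function.update z k t i) +
          g (i+1) * Real.exp (Function.update z k t (i+1) - x i)))))
    = fun t => Real.exp (-(((g 1 * Real.exp (z 1) +
          ∑ i ∈ Icc 1 (n-1), (Real.exp (x i - z i) + g (i+1) * Real.exp (z (i+1) - x i)))
        - ((if k = 1 then g 1 else 0) + (if 2 ≤ k then g k * Real.exp (-(x (k-1))) else 0))
            * Real.exp (z k)
        - (if k ≤ n - 1 then Real.exp (x k) else 0) * Real.exp (-(z k)))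
        + ((if k = 1 then g 1 else 0) + (if 2 ≤ k then g k * Real.exp (-(x (k-1))) else 0))
            * Real.exp t
        + (if k ≤ n - 1 then Real.exp (x k) else 0) * Real.exp (-t))) := by
  funext t
  set u := Function.update z k t with hu
  congr 1
  have hA : g 1 * Real.exp (u 1) - g 1 * Real.exp (z 1)
      = (if k = 1 then g 1 else 0) * (Real.exp t - Real.exp (z k)) := by
    rcases eq_or_ne k 1 with h | h
    · subst h; simp [hu, Function.update_self]; ring
    · simp [hu, Function.update_of_ne (Ne.symm h), h]
  have hB : (∑ i ∈ Icc 1 (n-1), (Real.exp (x i - u i) - Real.exp (x i - z i)))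
      = (if k ≤ n - 1 then Real.exp (x k) else 0) * (Real.exp (-t) - Real.exp (-(z k))) := by
    by_cases hk : k ≤ n - 1
    · rw [Finset.sum_eq_single_of_mem k (Finset.mem_Icc.2 ⟨hk1, hk⟩), if_pos hk]
      · rw [hu, Function.update_self, exp_sub', exp_sub']
        ring
      · intro i _ hik
        rw [hu, Function.update_of_ne hik, sub_self]
    · rw [if_neg hk, zero_mul]
      apply Finset.sum_eq_zero
      intro i hi
      rw [Finset.mem_Icc] at hi
      have : i ≠ k := by omega
      rw [hu, Function.update_of_ne this, sub_self]
  have hC : (∑ i ∈ Icc 1 (n-1), (g (i+1) * Real.exp (u (i+1) - x i)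
        - g (i+1) * Real.exp (z (i+1) - x i)))
      = (if 2 ≤ k then g k * Real.exp (-(x (k-1))) else 0)
          * (Real.exp t - Real.exp (z k)) := by
    by_cases hk : 2 ≤ k
    · rw [Finset.sum_eq_single_of_mem (k-1) (Finset.mem_Icc.2 ⟨by omega, by omega⟩), if_pos hk]
      · have h1 : k - 1 + 1 = k := by omega
        rw [h1, hu, Function.update_self, exp_sub', exp_sub']
        ring
      · intro i _ hik
        have : i + 1 ≠ k := by omega
        rw [hu, Function.update_of_ne this, sub_self]
    · rw [if_neg hk, zero_mul]
      apply Finset.sum_eq_zero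
      intro i hi
      rw [Finset.mem_Icc] at hi
      have : i + 1 ≠ k := by omega
      rw [hu, Function.update_of_ne this, sub_self]
  have hsum : (∑ i ∈ Icc 1 (n-1), (Real.exp (x i - u i) + g (i+1) * Real.exp (u (i+1) - x i)))
      = (∑ i ∈ Icc 1 (n-1), (Real.exp (x i - z i) + g (i+1) * Real.exp (z (i+1) - x i)))
        + (∑ i ∈ Icc 1 (n-1), (Real.exp (x i - u i) - Real.exp (x i - z i)))
        + (∑ i ∈ Icc 1 (n-1), (g (i+1) * Real.exp (u (i+1) - x i)
            - g (i+1) * Real.exp (z (i+1) - x i))) := by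
    rw [← Finset.sum_add_distrib, ← Finset.sum_add_distrib]
    exact Finset.sum_congr rfl fun i _ => by ring
  rw [hsum]
  linear_combination -hA - hB - hC

lemma xform (n : ℕ) (g z x : ℕ → ℝ) (k : ℕ) (hk1 : 1 ≤ k) (hk2 : k ≤ n - 1) :
    (fun t => Real.exp (-(g 1 * Real.exp (z 1) +
        ∑ i ∈ Icc 1 (n-1), (Real.exp (Function.update x k t i - z i) +
          g (i+1) * Real.exp (z (i+1) - Function.update x k t i)))))
    = fun t => Real.exp (-(((g 1 * Real.exp (z 1) +
          ∑ i ∈ Icc 1 (n-1), (Real.exp (x i - z i) + g (i+1) * Real.exp (z (i+1) - x i)))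
        - Real.exp (-(z k)) * Real.exp (x k)
        - (g (k+1) * Real.exp (z (k+1))) * Real.exp (-(x k)))
        + Real.exp (-(z k)) * Real.exp t
        + (g (k+1) * Real.exp (z (k+1))) * Real.exp (-t))) := by
  funext t
  set u := Function.update x k t with hu
  congr 1
  have hB : (∑ i ∈ Icc 1 (n-1), (Real.exp (u i - z i) - Real.exp (x i - z i)))
      = Real.exp (-(z k)) * (Real.exp t - Real.exp (x k)) := by
    rw [Finset.sum_eq_single_of_mem k (Finset.mem_Icc.2 ⟨hk1, hk2⟩)]
    · rw [hu, Function.update_self, exp_sub', exp_sub']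
      ring
    · intro i _ hik
      rw [hu, Function.update_of_ne hik, sub_self]
  have hC : (∑ i ∈ Icc 1 (n-1), (g (i+1) * Real.exp (z (i+1) - u i)
        - g (i+1) * Real.exp (z (i+1) - x i)))
      = (g (k+1) * Real.exp (z (k+1))) * (Real.exp (-t) - Real.exp (-(x k))) := by
    rw [Finset.sum_eq_single_of_mem k (Finset.mem_Icc.2 ⟨hk1, hk2⟩)]
    · rw [hu, Function.update_self, exp_sub', exp_sub']
      ring
    · intro i _ hik
      rw [hu, Function.update_of_ne hik, sub_self]
  have hsum : (∑ i ∈ Icc 1 (n-1), (Real.exp (u i - z i) + g (i+1) * Real.exp (z (i+1) - u i)))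
      = (∑ i ∈ Icc 1 (n-1), (Real.exp (x i - z i) + g (i+1) * Real.exp (z (i+1) - x i)))
        + (∑ i ∈ Icc 1 (n-1), (Real.exp (u i - z i) - Real.exp (x i - z i)))
        + (∑ i ∈ Icc 1 (n-1), (g (i+1) * Real.exp (z (i+1) - u i)
            - g (i+1) * Real.exp (z (i+1) - x i))) := by
    rw [← Finset.sum_add_distrib, ← Finset.sum_add_distrib]
    exact Finset.sum_congr rfl fun i _ => by ring
  rw [hsum]
  linear_combination -hB - hC

lemma main_lemma (n : ℕ) (hn : 2 ≤ n) (g z x : ℕ → ℝ) :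
      -(1 / 2) * (∑ i ∈ Finset.Icc 1 n, pd2 (fun z' =>
          Real.exp (-(g 1 * Real.exp (z' 1) + ∑ i ∈ Finset.Icc 1 (n - 1),
            (Real.exp (x i - z' i) + g (i + 1) * Real.exp (z' (i + 1) - x i))))) i z)
          + (-(g 1 / 2) * Real.exp (z 1) + g 1 ^ 2 / 2 * Real.exp (2 * z 1)
              + ∑ i ∈ Finset.Icc 1 (n - 1), g (i + 1) * Real.exp (z (i + 1) - z i)) *
            Real.exp (-(g 1 * Real.exp (z 1) + ∑ i ∈ Finset.Icc 1 (n - 1),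
              (Real.exp (x i - z i) + g (i + 1) * Real.exp (z (i + 1) - x i))))
        = -(1 / 2) * (∑ i ∈ Finset.Icc 1 (n - 1), pd2 (fun x' =>
            Real.exp (-(g 1 * Real.exp (z 1) + ∑ i ∈ Finset.Icc 1 (n - 1),
              (Real.exp (x' i - z i) + g (i + 1) * Real.exp (z (i + 1) - x' i))))) i x)
          + (g 1 * Real.exp (x 1)
              + ∑ i ∈ Finset.Icc 1 (n - 2), g (i + 1) * Real.exp (x (i + 1) - x i)) *
            Real.exp (-(g 1 * Real.exp (z 1) + ∑ i ∈ Finset.Icc 1 (n - 1),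
              (Real.exp (x i - z i) + g (i + 1) * Real.exp (z (i + 1) - x i)))) := by
  have h2n1 : (1:ℕ) ≤ n - 1 := by omega
  -- abbreviation for the common exponential factor
  set EQ := Real.exp (-(g 1 * Real.exp (z 1) + ∑ i ∈ Finset.Icc 1 (n - 1),
      (Real.exp (x i - z i) + g (i + 1) * Real.exp (z (i + 1) - x i)))) with hEQ
  -- z-side pointwise pd2 values
  have hz : ∀ k ∈ Finset.Icc 1 n, pd2 (fun z' =>
      Real.exp (-(g 1 * Real.exp (z' 1) + ∑ i ∈ Finset.Icc 1 (n - 1),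
        (Real.exp (x i - z' i) + g (i + 1) * Real.exp (z' (i + 1) - x i))))) k z
      = (((((if k = 1 then g 1 else 0) + (if 2 ≤ k then g k * Real.exp (-(x (k-1))) else 0))
            * Real.exp (z k)
          - (if k ≤ n - 1 then Real.exp (x k) else 0) * Real.exp (-(z k)))^2)
        - ((((if k = 1 then g 1 else 0) + (if 2 ≤ k then g k * Real.exp (-(x (k-1))) else 0))
            * Real.exp (z k)
          + (if k ≤ n - 1 then Real.exp (x k) else 0) * Real.exp (-(z k))))) * EQ := by
    intro k hk
    rw [Finset.mem_Icc] at hk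
    rw [pd2_of_form (fun z' =>
        Real.exp (-(g 1 * Real.exp (z' 1) + ∑ i ∈ Finset.Icc 1 (n - 1),
          (Real.exp (x i - z' i) + g (i + 1) * Real.exp (z' (i + 1) - x i)))))
      k z _ _ _ (zform n g z x k hk.1 hk.2)]
    rw [hEQ]
    congr 2
    ring
  -- x-side pointwise pd2 values
  have hx : ∀ k ∈ Finset.Icc 1 (n-1), pd2 (fun x' =>
      Real.exp (-(g 1 * Real.exp (z 1) + ∑ i ∈ Finset.Icc 1 (n - 1),
        (Real.exp (x' i - z i) + g (i + 1) * Real.exp (z (i + 1) - x' i))))) k x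
      = ((Real.exp (x k - z k) - g (k+1) * Real.exp (z (k+1) - x k))^2
          - (Real.exp (x k - z k) + g (k+1) * Real.exp (z (k+1) - x k))) * EQ := by
    intro k hk
    rw [Finset.mem_Icc] at hk
    rw [pd2_of_form (fun x' =>
        Real.exp (-(g 1 * Real.exp (z 1) + ∑ i ∈ Finset.Icc 1 (n - 1),
          (Real.exp (x' i - z i) + g (i + 1) * Real.exp (z (i + 1) - x' i)))))
      k x _ _ _ (xform n g z x k hk.1 hk.2)]
    rw [hEQ, exp_sub' (x k) (z k), exp_sub' (z (k+1)) (x k)]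
    congr 2 <;> ring
  -- shift helpers
  have hshift3 : ∀ f : ℕ → ℝ, ∑ k ∈ Finset.Icc 2 n, f k = ∑ i ∈ Finset.Icc 1 (n-1), f (i+1) := by
    intro f
    rw [show Finset.Icc 2 n = (Finset.Icc 1 (n-1)).map (addRightEmbedding 1) from by
      rw [Finset.map_add_right_Icc]; congr 1 <;> omega, Finset.sum_map]
    rfl
  have hshift4 : ∀ f : ℕ → ℝ, ∑ k ∈ Finset.Icc 2 (n-1), f k
      = ∑ i ∈ Finset.Icc 1 (n-2), f (i+1) := by
    intro f
    rw [show Finset.Icc 2 (n-1) = (Finset.Icc 1 (n-2)).map (addRightEmbedding 1) from by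
      rw [Finset.map_add_right_Icc]; congr 1 <;> omega, Finset.sum_map]
    rfl
  -- x-side sum closed form
  have hxs : (∑ k ∈ Finset.Icc 1 (n-1), pd2 (fun x' =>
      Real.exp (-(g 1 * Real.exp (z 1) + ∑ i ∈ Finset.Icc 1 (n - 1),
        (Real.exp (x' i - z i) + g (i + 1) * Real.exp (z (i + 1) - x' i))))) k x)
      = ((∑ i ∈ Finset.Icc 1 (n-1), (Real.exp (x i - z i)^2 - Real.exp (x i - z i)))
        + (∑ i ∈ Finset.Icc 1 (n-1), ((g (i+1) * Real.exp (z (i+1) - x i))^2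
            - g (i+1) * Real.exp (z (i+1) - x i)))
        - 2 * ∑ i ∈ Finset.Icc 1 (n-1),
            Real.exp (x i - z i) * (g (i+1) * Real.exp (z (i+1) - x i))) * EQ := by
    rw [Finset.sum_congr rfl hx, ← Finset.sum_mul]
    congr 1
    rw [Finset.mul_sum, ← Finset.sum_add_distrib, ← Finset.sum_sub_distrib]
    exact Finset.sum_congr rfl fun i _ => by ring
  -- z-side sum closed form
  have hzs : (∑ k ∈ Finset.Icc 1 n, pd2 (fun z' =>
      Real.exp (-(g 1 * Real.exp (z' 1) + ∑ i ∈ Finset.Icc 1 (n - 1),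
        (Real.exp (x i - z' i) + g (i + 1) * Real.exp (z' (i + 1) - x i))))) k z)
      = ((((g 1 * Real.exp (z 1) - Real.exp (x 1 - z 1))^2
            - (g 1 * Real.exp (z 1) + Real.exp (x 1 - z 1)))
        + (∑ i ∈ Finset.Icc 1 (n-1), ((g (i+1) * Real.exp (z (i+1) - x i))^2
            - g (i+1) * Real.exp (z (i+1) - x i)))
        + ((∑ i ∈ Finset.Icc 1 (n-2), (Real.exp (x (i+1) - z (i+1))^2
              - Real.exp (x (i+1) - z (i+1))))
          - 2 * ∑ i ∈ Finset.Icc 1 (n-2),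
              Real.exp (x (i+1) - z (i+1)) * (g (i+1) * Real.exp (z (i+1) - x i))))) * EQ := by
    rw [Finset.sum_congr rfl hz, ← Finset.sum_mul]
    congr 1
    rw [show Finset.Icc 1 n = insert 1 (Finset.Icc 2 n) from by
        ext m; simp [Finset.mem_Icc]; omega,
      Finset.sum_insert (by simp), hshift3]
    have eP1 : ((((if (1:ℕ) = 1 then g 1 else 0)
          + (if 2 ≤ (1:ℕ) then g 1 * Real.exp (-(x (1-1))) else 0)) * Real.exp (z 1)
        - (if (1:ℕ) ≤ n - 1 then Real.exp (x 1) else 0) * Real.exp (-(z 1)))^2)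
        - ((((if (1:ℕ) = 1 then g 1 else 0)
          + (if 2 ≤ (1:ℕ) then g 1 * Real.exp (-(x (1-1))) else 0)) * Real.exp (z 1)
        + (if (1:ℕ) ≤ n - 1 then Real.exp (x 1) else 0) * Real.exp (-(z 1))))
        = (g 1 * Real.exp (z 1) - Real.exp (x 1 - z 1))^2
          - (g 1 * Real.exp (z 1) + Real.exp (x 1 - z 1)) := by
      rw [if_pos (show (1:ℕ) = 1 from rfl), if_neg (show ¬(2:ℕ) ≤ 1 by omega),
        if_pos h2n1, exp_sub' (x 1) (z 1)]
      ring
    rw [eP1]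
    have hFi : ∀ i ∈ Finset.Icc 1 (n-1),
        (((((if i+1 = 1 then g 1 else 0)
            + (if 2 ≤ i+1 then g (i+1) * Real.exp (-(x (i+1-1))) else 0)) * Real.exp (z (i+1))
          - (if i+1 ≤ n - 1 then Real.exp (x (i+1)) else 0) * Real.exp (-(z (i+1))))^2)
          - ((((if i+1 = 1 then g 1 else 0)
            + (if 2 ≤ i+1 then g (i+1) * Real.exp (-(x (i+1-1))) else 0)) * Real.exp (z (i+1))
          + (if i+1 ≤ n - 1 then Real.exp (x (i+1)) else 0) * Real.exp (-(z (i+1))))))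
        = (((g (i+1) * Real.exp (z (i+1) - x i))^2 - g (i+1) * Real.exp (z (i+1) - x i))
          + (if i+1 ≤ n-1 then (Real.exp (x (i+1) - z (i+1))^2 - Real.exp (x (i+1) - z (i+1))
              - 2 * (Real.exp (x (i+1) - z (i+1)) * (g (i+1) * Real.exp (z (i+1) - x i))))
            else 0)) := by
      intro i hi
      rw [Finset.mem_Icc] at hi
      simp only [if_neg (by omega : ¬ (i+1 = 1)), if_pos (by omega : 2 ≤ i+1),
        Nat.add_sub_cancel]
      by_cases h : i+1 ≤ n-1
      · simp only [if_pos h]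
        rw [exp_sub' (z (i+1)) (x i), exp_sub' (x (i+1)) (z (i+1))]
        ring
      · simp only [if_neg h]
        rw [exp_sub' (z (i+1)) (x i)]
        ring
    rw [Finset.sum_congr rfl hFi, Finset.sum_add_distrib, ← Finset.sum_filter,
      show (Finset.Icc 1 (n-1)).filter (fun i => i + 1 ≤ n - 1) = Finset.Icc 1 (n-2) from by
        ext m; simp [Finset.mem_Icc]; omega]
    have hs2 : (∑ i ∈ Finset.Icc 1 (n-2), (Real.exp (x (i+1) - z (i+1))^2
          - Real.exp (x (i+1) - z (i+1))
          - 2 * (Real.exp (x (i+1) - z (i+1)) * (g (i+1) * Real.exp (z (i+1) - x i)))))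
        = (∑ i ∈ Finset.Icc 1 (n-2), (Real.exp (x (i+1) - z (i+1))^2
            - Real.exp (x (i+1) - z (i+1))))
          - 2 * ∑ i ∈ Finset.Icc 1 (n-2),
              Real.exp (x (i+1) - z (i+1)) * (g (i+1) * Real.exp (z (i+1) - x i)) := by
      rw [Finset.mul_sum, ← Finset.sum_sub_distrib]
    linear_combination hs2
  -- shift identity for the a-square sums
  have hshift : (∑ i ∈ Finset.Icc 1 (n-1), (Real.exp (x i - z i)^2 - Real.exp (x i - z i)))
      = (Real.exp (x 1 - z 1)^2 - Real.exp (x 1 - z 1))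
        + ∑ i ∈ Finset.Icc 1 (n-2), (Real.exp (x (i+1) - z (i+1))^2
            - Real.exp (x (i+1) - z (i+1))) := by
    rw [show Finset.Icc 1 (n-1) = insert 1 (Finset.Icc 2 (n-1)) from by
        ext m; simp [Finset.mem_Icc]; omega,
      Finset.sum_insert (by simp), hshift4]
  -- potential sums rewritten
  have hVz : (∑ i ∈ Finset.Icc 1 (n-1), g (i+1) * Real.exp (z (i+1) - z i))
      = ∑ i ∈ Finset.Icc 1 (n-1), Real.exp (x i - z i) * (g (i+1) * Real.exp (z (i+1) - x i)) := by
    refine Finset.sum_congr rfl fun i _ => ?_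
    rw [show z (i+1) - z i = (x i - z i) + (z (i+1) - x i) by ring, Real.exp_add]
    ring
  have hVx : (∑ i ∈ Finset.Icc 1 (n-2), g (i+1) * Real.exp (x (i+1) - x i))
      = ∑ i ∈ Finset.Icc 1 (n-2),
          Real.exp (x (i+1) - z (i+1)) * (g (i+1) * Real.exp (z (i+1) - x i)) := by
    refine Finset.sum_congr rfl fun i _ => ?_
    rw [show x (i+1) - x i = (x (i+1) - z (i+1)) + (z (i+1) - x i) by ring, Real.exp_add]
    ring
  have h2z : Real.exp (2 * z 1) = Real.exp (z 1) * Real.exp (z 1) := by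
    rw [← Real.exp_add]; congr 1; ring
  have hx1 : Real.exp (x 1) = Real.exp (x 1 - z 1) * Real.exp (z 1) := by
    rw [← Real.exp_add]; congr 1; ring
  rw [hzs, hxs, hVz, hVx, h2z, hx1]
  linear_combination (EQ * (1/2)) * hshift

/-- The kernel `Q(z,x) = exp(−(g_1 e^{z_1} + Σ_{i=1}^{n−1}(e^{x_i−z_i} + g_{i+1} e^{z_{i+1}−x_i})))`
intertwines the quadratic Hamiltonians of the `BC*_n` and `B_{n−1}` Toda chains. -/
theorem stmt_2 (n : ℕ) (hn : 2 ≤ n) (g : ℕ → ℝ) :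
    let Q : (ℕ → ℝ) → (ℕ → ℝ) → ℝ := fun z x =>
      Real.exp (-(g 1 * Real.exp (z 1) + ∑ i ∈ Finset.Icc 1 (n - 1),
        (Real.exp (x i - z i) + g (i + 1) * Real.exp (z (i + 1) - x i))))
    ∀ z x : ℕ → ℝ,
      -(1 / 2) * (∑ i ∈ Finset.Icc 1 n, pd2 (fun z' => Q z' x) i z)
          + (-(g 1 / 2) * Real.exp (z 1) + g 1 ^ 2 / 2 * Real.exp (2 * z 1)
              + ∑ i ∈ Finset.Icc 1 (n - 1), g (i + 1) * Real.exp (z (i + 1) - z i)) * Q z x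
        = -(1 / 2) * (∑ i ∈ Finset.Icc 1 (n - 1), pd2 (fun x' => Q z x') i x)
          + (g 1 * Real.exp (x 1)
              + ∑ i ∈ Finset.Icc 1 (n - 2), g (i + 1) * Real.exp (x (i + 1) - x i)) * Q z x := by
  intro Q z x
  exact main_lemma n hn g z x
end

section
/- Let n ≥ 2 and g_1,…,g_n ∈ ℝ. Define Q : ℝ^n × ℝ^n → ℝ by Q(x,z) = exp(−(g_1 e^{z_1} + Σ_{i=1}^{n−1}(e^{x_i − z_i} + g_{i+1} e^{z_{i+1} − x_i}) + e^{x_n − z_n})). Then for all (x,z): (−(1/2) Σ_{i=1}^n ∂²/∂x_i² + g_1 e^{x_1} + Σ_{i=1}^{n−1} g_{i+1} e^{x_{i+1}−x_i}) Q = (−(1/2) Σ_{i=1}^n ∂²/∂z_i² − (g_1/2) e^{z_1} + (g_1²/2) e^{2z_1} + Σ_{i=1}^{n−1} g_{i+1} e^{z_{i+1}−z_i}) Q. -/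
lemma d2exp (A B C u v s : ℝ) :
    deriv (deriv (fun t => Real.exp (-(A + B * Real.exp (t - u) + C * Real.exp (v - t))))) s
      = Real.exp (-(A + B * Real.exp (s - u) + C * Real.exp (v - s))) *
        ((B * Real.exp (s - u) - C * Real.exp (v - s)) ^ 2
          - (B * Real.exp (s - u) + C * Real.exp (v - s))) := by
  have e1 : ∀ t : ℝ, HasDerivAt (fun t : ℝ => Real.exp (t - u)) (Real.exp (t - u)) t := by
    intro t
    simpa using ((hasDerivAt_id t).sub_const u).exp
  have e2 : ∀ t : ℝ, HasDerivAt (fun t : ℝ => Real.exp (v - t)) (-Real.exp (v - t)) t := by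
    intro t
    simpa using ((hasDerivAt_id t).const_sub v).exp
  have h1 : ∀ t : ℝ, HasDerivAt (fun t => Real.exp (-(A + B * Real.exp (t - u) + C * Real.exp (v - t))))
      (Real.exp (-(A + B * Real.exp (t - u) + C * Real.exp (v - t))) *
        (-(B * Real.exp (t - u) - C * Real.exp (v - t)))) t := by
    intro t
    have h := ((((e1 t).const_mul B).const_add A).fun_add ((e2 t).const_mul C)).fun_neg.exp
    convert h using 1
    ring
  have hd1 : deriv (fun t => Real.exp (-(A + B * Real.exp (t - u) + C * Real.exp (v - t))))
      = fun t => Real.exp (-(A + B * Real.exp (t - u) + C * Real.exp (v - t))) *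
        (-(B * Real.exp (t - u) - C * Real.exp (v - t))) := funext fun t => (h1 t).deriv
  rw [hd1]
  have hg : HasDerivAt (fun t : ℝ => -(B * Real.exp (t - u) - C * Real.exp (v - t)))
      (-(B * Real.exp (s - u) + C * Real.exp (v - s))) s := by
    have h := (((e1 s).const_mul B).fun_sub ((e2 s).const_mul C)).fun_neg
    exact h.congr_deriv (by ring)
  rw [((h1 s).fun_mul hg).deriv]
  ring

lemma pd2_form (f : (ℕ → ℝ) → ℝ) (i : ℕ) (p : ℕ → ℝ) (A B C u v : ℝ)
    (hf : ∀ t, f (Function.update p i t)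
      = Real.exp (-(A + B * Real.exp (t - u) + C * Real.exp (v - t)))) :
    pd2 f i p = f p *
      ((B * Real.exp (p i - u) - C * Real.exp (v - p i)) ^ 2
        - (B * Real.exp (p i - u) + C * Real.exp (v - p i))) := by
  have hfp : f p = Real.exp (-(A + B * Real.exp (p i - u) + C * Real.exp (v - p i))) := by
    have h := hf (p i)
    rwa [Function.update_eq_self] at h
  unfold pd2
  rw [show (fun t => f (Function.update p i t))
      = (fun t => Real.exp (-(A + B * Real.exp (t - u) + C * Real.exp (v - t)))) from funext hf,
    hfp, d2exp]

lemma sum_Icc_split (f : ℕ → ℝ) (k : ℕ) :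
    ∑ i ∈ Finset.Icc 1 (k+2), f i = f 1 + ∑ i ∈ Finset.Icc 1 (k+1), f (i+1) := by
  induction k with
  | zero =>
    show ∑ i ∈ Finset.Icc 1 2, f i = f 1 + ∑ i ∈ Finset.Icc 1 1, f (i+1)
    rw [show Finset.Icc 1 2 = {1, 2} from by decide, Finset.Icc_self, Finset.sum_singleton,
      Finset.sum_insert (by decide), Finset.sum_singleton]
  | succ k ih =>
    have t1 : ∑ i ∈ Finset.Icc 1 (k+3), f i = (∑ i ∈ Finset.Icc 1 (k+2), f i) + f (k+3) :=
      Finset.sum_Icc_succ_top (by omega) f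
    have t2 : ∑ i ∈ Finset.Icc 1 (k+2), f (i+1)
        = (∑ i ∈ Finset.Icc 1 (k+1), f (i+1)) + f (k+3) :=
      Finset.sum_Icc_succ_top (by omega) (fun i => f (i+1))
    show ∑ i ∈ Finset.Icc 1 (k+3), f i = f 1 + ∑ i ∈ Finset.Icc 1 (k+2), f (i+1)
    rw [t1, ih, t2]
    ring

lemma tele (F : ℕ → ℝ) (k : ℕ) :
    ∑ i ∈ Finset.Icc 1 (k+1), (F i - F (i+1)) = F 1 - F (k+2) := by
  induction k with
  | zero =>
    show ∑ i ∈ Finset.Icc 1 1, (F i - F (i+1)) = F 1 - F 2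
    rw [Finset.Icc_self, Finset.sum_singleton]
  | succ k ih =>
    have t1 : ∑ i ∈ Finset.Icc 1 (k+2), (F i - F (i+1))
        = (∑ i ∈ Finset.Icc 1 (k+1), (F i - F (i+1))) + (F (k+2) - F (k+3)) :=
      Finset.sum_Icc_succ_top (by omega) _
    show ∑ i ∈ Finset.Icc 1 (k+2), (F i - F (i+1)) = F 1 - F (k+3)
    rw [t1, ih]
    ring

lemma perterm (Qv E E' Bv Gx Gz : ℝ) (h1 : E * Bv = Gz) (h2 : E' * Bv = Gx) :
    (-(1/2) * (Qv * ((1 * E - Bv)^2 - (1 * E + Bv))) + Gx * Qv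
      + (1/2) * (Qv * ((Bv - 1 * E')^2 - (Bv + 1 * E'))))
      - Gz * Qv
    = Qv * (E - E^2)/2 - Qv * (E' - E'^2)/2 := by
  linear_combination Qv * h1 - Qv * h2
/-- The kernel `Q(x,z) = exp(−(g_1 e^{z_1} + Σ_{i=1}^{n−1}(e^{x_i−z_i} + g_{i+1} e^{z_{i+1}−x_i})
+ e^{x_n−z_n}))` intertwines the quadratic Hamiltonians of the `B_n` and `BC*_n` Toda chains. -/
theorem stmt_3 (n : ℕ) (hn : 2 ≤ n) (g : ℕ → ℝ) :
    let Q : (ℕ → ℝ) → (ℕ → ℝ) → ℝ := fun x z =>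
      Real.exp (-(g 1 * Real.exp (z 1)
        + (∑ i ∈ Finset.Icc 1 (n - 1),
            (Real.exp (x i - z i) + g (i + 1) * Real.exp (z (i + 1) - x i)))
        + Real.exp (x n - z n)))
    ∀ x z : ℕ → ℝ,
      -(1 / 2) * (∑ i ∈ Finset.Icc 1 n, pd2 (fun x' => Q x' z) i x)
          + (g 1 * Real.exp (x 1)
              + ∑ i ∈ Finset.Icc 1 (n - 1), g (i + 1) * Real.exp (x (i + 1) - x i)) * Q x z
        = -(1 / 2) * (∑ i ∈ Finset.Icc 1 n, pd2 (fun z' => Q x z') i z)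
          + (-(g 1 / 2) * Real.exp (z 1) + g 1 ^ 2 / 2 * Real.exp (2 * z 1)
              + ∑ i ∈ Finset.Icc 1 (n - 1), g (i + 1) * Real.exp (z (i + 1) - z i)) * Q x z := by
  obtain ⟨m, rfl⟩ : ∃ m, n = m + 2 := ⟨n - 2, by omega⟩
  intro Q x z
  have hIcc : m + 2 - 1 = m + 1 := rfl
  -- second x-derivatives, middle indices
  have hx : ∀ j ∈ Finset.Icc 1 (m+1), pd2 (fun x' => Q x' z) j x
      = Q x z * ((1 * Real.exp (x j - z j) - g (j+1) * Real.exp (z (j+1) - x j)) ^ 2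
          - (1 * Real.exp (x j - z j) + g (j+1) * Real.exp (z (j+1) - x j))) := by
    intro j hj
    refine pd2_form _ _ _
      (g 1 * Real.exp (z 1)
        + (∑ k ∈ (Finset.Icc 1 (m+1)).erase j,
            (Real.exp (x k - z k) + g (k+1) * Real.exp (z (k+1) - x k)))
        + Real.exp (x (m+2) - z (m+2))) _ _ _ _ ?_
    intro t
    simp only [Q, hIcc]
    rw [Real.exp_eq_exp, neg_inj]
    rw [← Finset.sum_erase_add _ _ hj]
    have hrest : ∑ k ∈ (Finset.Icc 1 (m+1)).erase j,
        (Real.exp (Function.update x j t k - z k)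
          + g (k+1) * Real.exp (z (k+1) - Function.update x j t k))
        = ∑ k ∈ (Finset.Icc 1 (m+1)).erase j,
        (Real.exp (x k - z k) + g (k+1) * Real.exp (z (k+1) - x k)) := by
      refine Finset.sum_congr rfl fun k hk => ?_
      rw [Function.update_of_ne (Finset.ne_of_mem_erase hk)]
    have hjm : j ≤ m + 1 := (Finset.mem_Icc.mp hj).2
    rw [hrest, Function.update_self, Function.update_of_ne (by omega : (m+2:ℕ) ≠ j)]
    ring
  -- second x-derivative, top index
  have hxn : pd2 (fun x' => Q x' z) (m+2) x
      = Q x z * ((1 * Real.exp (x (m+2) - z (m+2)) - 0 * Real.exp (0 - x (m+2))) ^ 2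
          - (1 * Real.exp (x (m+2) - z (m+2)) + 0 * Real.exp (0 - x (m+2)))) := by
    refine pd2_form _ _ _
      (g 1 * Real.exp (z 1)
        + (∑ k ∈ Finset.Icc 1 (m+1),
            (Real.exp (x k - z k) + g (k+1) * Real.exp (z (k+1) - x k)))) 1 0 (z (m+2)) 0 ?_
    intro t
    simp only [Q, hIcc]
    rw [Real.exp_eq_exp, neg_inj]
    have hrest : ∑ k ∈ Finset.Icc 1 (m+1),
        (Real.exp (Function.update x (m+2) t k - z k)
          + g (k+1) * Real.exp (z (k+1) - Function.update x (m+2) t k))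
        = ∑ k ∈ Finset.Icc 1 (m+1),
        (Real.exp (x k - z k) + g (k+1) * Real.exp (z (k+1) - x k)) := by
      refine Finset.sum_congr rfl fun k hk => ?_
      have hk' : k ≤ m + 1 := (Finset.mem_Icc.mp hk).2
      rw [Function.update_of_ne (by omega : k ≠ m+2)]
    rw [hrest, Function.update_self]
    ring
  -- second z-derivative, bottom index
  have hz1 : pd2 (fun z' => Q x z') 1 z
      = Q x z * ((g 1 * Real.exp (z 1) - 1 * Real.exp (x 1 - z 1)) ^ 2
          - (g 1 * Real.exp (z 1) + 1 * Real.exp (x 1 - z 1))) := by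
    have h := pd2_form (fun z' => Q x z') 1 z
      ((∑ k ∈ (Finset.Icc 1 (m+1)).erase 1,
          (Real.exp (x k - z k) + g (k+1) * Real.exp (z (k+1) - x k)))
        + g (1+1) * Real.exp (z (1+1) - x 1) + Real.exp (x (m+2) - z (m+2)))
      (g 1) 1 0 (x 1) ?_
    · simpa only [sub_zero] using h
    intro t
    simp only [Q, hIcc]
    rw [Real.exp_eq_exp, neg_inj]
    have h1m : (1:ℕ) ∈ Finset.Icc 1 (m+1) := by simp
    rw [← Finset.sum_erase_add _ _ h1m]
    have hrest : ∑ k ∈ (Finset.Icc 1 (m+1)).erase 1,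
        (Real.exp (x k - Function.update z 1 t k)
          + g (k+1) * Real.exp (Function.update z 1 t (k+1) - x k))
        = ∑ k ∈ (Finset.Icc 1 (m+1)).erase 1,
        (Real.exp (x k - z k) + g (k+1) * Real.exp (z (k+1) - x k)) := by
      refine Finset.sum_congr rfl fun k hk => ?_
      have hk1 : 1 ≤ k := (Finset.mem_Icc.mp (Finset.mem_of_mem_erase hk)).1
      rw [Function.update_of_ne (Finset.ne_of_mem_erase hk),
        Function.update_of_ne (by omega : k + 1 ≠ 1)]
    rw [hrest, Function.update_self, Function.update_of_ne (by omega : (1:ℕ)+1 ≠ 1),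
      Function.update_of_ne (by omega : (m:ℕ)+2 ≠ 1)]
    simp only [sub_zero]
    ring
  -- second z-derivatives, indices 2,…,m+2 (as j+1, j = 1,…,m+1)
  have hz2 : ∀ j ∈ Finset.Icc 1 (m+1), pd2 (fun z' => Q x z') (j+1) z
      = Q x z * ((g (j+1) * Real.exp (z (j+1) - x j) - 1 * Real.exp (x (j+1) - z (j+1))) ^ 2
          - (g (j+1) * Real.exp (z (j+1) - x j) + 1 * Real.exp (x (j+1) - z (j+1)))) := by
    intro j hj
    rw [Finset.mem_Icc] at hj
    by_cases hjm : j ≤ m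
    · -- middle case: both the j-th and (j+1)-st summands involve z (j+1)
      refine pd2_form _ _ _
        ((∑ k ∈ ((Finset.Icc 1 (m+1)).erase (j+1)).erase j,
            (Real.exp (x k - z k) + g (k+1) * Real.exp (z (k+1) - x k)))
          + Real.exp (x j - z j) + g (j+1+1) * Real.exp (z (j+1+1) - x (j+1))
          + g 1 * Real.exp (z 1) + Real.exp (x (m+2) - z (m+2))) _ _ _ _ ?_
      intro t
      simp only [Q, hIcc]
      rw [Real.exp_eq_exp, neg_inj]
      have h1m : j + 1 ∈ Finset.Icc 1 (m+1) := by simp; omega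
      have h2m : j ∈ (Finset.Icc 1 (m+1)).erase (j+1) := by
        rw [Finset.mem_erase, Finset.mem_Icc]; omega
      rw [← Finset.sum_erase_add _ _ h1m, ← Finset.sum_erase_add _ _ h2m]
      have hrest : ∑ k ∈ ((Finset.Icc 1 (m+1)).erase (j+1)).erase j,
          (Real.exp (x k - Function.update z (j+1) t k)
            + g (k+1) * Real.exp (Function.update z (j+1) t (k+1) - x k))
          = ∑ k ∈ ((Finset.Icc 1 (m+1)).erase (j+1)).erase j,
          (Real.exp (x k - z k) + g (k+1) * Real.exp (z (k+1) - x k)) := by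
        refine Finset.sum_congr rfl fun k hk => ?_
        have hk1 : k ≠ j := Finset.ne_of_mem_erase hk
        have hk2 : k ≠ j + 1 := Finset.ne_of_mem_erase (Finset.mem_of_mem_erase hk)
        rw [Function.update_of_ne hk2, Function.update_of_ne (by omega : k + 1 ≠ j + 1)]
      rw [hrest, Function.update_self,
        Function.update_of_ne (by omega : j ≠ j + 1),
        Function.update_of_ne (by omega : j + 1 + 1 ≠ j + 1),
        Function.update_of_ne (by omega : (1:ℕ) ≠ j + 1),
        Function.update_of_ne (by omega : m + 2 ≠ j + 1)]
      ring
    · -- top case: j = m+1, the updated index is m+2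
      obtain rfl : j = m + 1 := by omega
      simp only [show m+1+1 = m+2 from rfl]
      refine pd2_form _ _ _
        ((∑ k ∈ (Finset.Icc 1 (m+1)).erase (m+1),
            (Real.exp (x k - z k) + g (k+1) * Real.exp (z (k+1) - x k)))
          + Real.exp (x (m+1) - z (m+1)) + g 1 * Real.exp (z 1)) _ _ _ _ ?_
      intro t
      simp only [Q, hIcc]
      rw [Real.exp_eq_exp, neg_inj]
      have h1m : m + 1 ∈ Finset.Icc 1 (m+1) := by simp
      rw [← Finset.sum_erase_add _ _ h1m]
      have hrest : ∑ k ∈ (Finset.Icc 1 (m+1)).erase (m+1),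
          (Real.exp (x k - Function.update z (m+2) t k)
            + g (k+1) * Real.exp (Function.update z (m+2) t (k+1) - x k))
          = ∑ k ∈ (Finset.Icc 1 (m+1)).erase (m+1),
          (Real.exp (x k - z k) + g (k+1) * Real.exp (z (k+1) - x k)) := by
        refine Finset.sum_congr rfl fun k hk => ?_
        have hk1 : k ≠ m + 1 := Finset.ne_of_mem_erase hk
        have hk2 : k ≤ m + 1 := (Finset.mem_Icc.mp (Finset.mem_of_mem_erase hk)).2
        rw [Function.update_of_ne (by omega : k ≠ m + 2),
          Function.update_of_ne (by omega : k + 1 ≠ m + 2)]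
      rw [hrest, show m+1+1 = m+2 from rfl, Function.update_self,
        Function.update_of_ne (by omega : m + 1 ≠ m + 2),
        Function.update_of_ne (by omega : (1:ℕ) ≠ m + 2)]
      ring
  -- assemble the sums
  have ex : ∑ i ∈ Finset.Icc 1 (m+2), pd2 (fun x' => Q x' z) i x
      = (∑ j ∈ Finset.Icc 1 (m+1), Q x z *
          ((1 * Real.exp (x j - z j) - g (j+1) * Real.exp (z (j+1) - x j)) ^ 2
            - (1 * Real.exp (x j - z j) + g (j+1) * Real.exp (z (j+1) - x j))))
        + Q x z * ((1 * Real.exp (x (m+2) - z (m+2)) - 0 * Real.exp (0 - x (m+2))) ^ 2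
            - (1 * Real.exp (x (m+2) - z (m+2)) + 0 * Real.exp (0 - x (m+2)))) := by
    have t1 : ∑ i ∈ Finset.Icc 1 (m+2), pd2 (fun x' => Q x' z) i x
        = (∑ i ∈ Finset.Icc 1 (m+1), pd2 (fun x' => Q x' z) i x)
          + pd2 (fun x' => Q x' z) (m+2) x :=
      Finset.sum_Icc_succ_top (by omega) _
    rw [t1, hxn, Finset.sum_congr rfl hx]
  have ez : ∑ i ∈ Finset.Icc 1 (m+2), pd2 (fun z' => Q x z') i z
      = Q x z * ((g 1 * Real.exp (z 1) - 1 * Real.exp (x 1 - z 1)) ^ 2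
          - (g 1 * Real.exp (z 1) + 1 * Real.exp (x 1 - z 1)))
        + ∑ j ∈ Finset.Icc 1 (m+1), Q x z *
          ((g (j+1) * Real.exp (z (j+1) - x j) - 1 * Real.exp (x (j+1) - z (j+1))) ^ 2
            - (g (j+1) * Real.exp (z (j+1) - x j) + 1 * Real.exp (x (j+1) - z (j+1)))) := by
    rw [sum_Icc_split (fun i => pd2 (fun z' => Q x z') i z) m, hz1, Finset.sum_congr rfl hz2]
  rw [show m + 2 - 1 = m + 1 from rfl] at *
  rw [ex, ez]
  -- product identities
  have hprod1 : ∀ j : ℕ, Real.exp (x j - z j) * (g (j+1) * Real.exp (z (j+1) - x j))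
      = g (j+1) * Real.exp (z (j+1) - z j) := by
    intro j
    rw [mul_left_comm, ← Real.exp_add]
    congr 1
    rw [Real.exp_eq_exp]
    ring
  have hprod2 : ∀ j : ℕ, Real.exp (x (j+1) - z (j+1)) * (g (j+1) * Real.exp (z (j+1) - x j))
      = g (j+1) * Real.exp (x (j+1) - x j) := by
    intro j
    rw [mul_left_comm, ← Real.exp_add]
    congr 1
    rw [Real.exp_eq_exp]
    ring
  have hx1 : Real.exp (x 1 - z 1) * (g 1 * Real.exp (z 1)) = g 1 * Real.exp (x 1) := by
    rw [mul_left_comm, ← Real.exp_add]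
    congr 1
    rw [Real.exp_eq_exp]
    ring
  have h2z : Real.exp (2 * z 1) = Real.exp (z 1) * Real.exp (z 1) := by
    rw [← Real.exp_add]
    rw [Real.exp_eq_exp]
    ring
  -- the telescoping sum identity
  have hsum : -(1/2) * (∑ j ∈ Finset.Icc 1 (m+1), Q x z *
        ((1 * Real.exp (x j - z j) - g (j+1) * Real.exp (z (j+1) - x j)) ^ 2
          - (1 * Real.exp (x j - z j) + g (j+1) * Real.exp (z (j+1) - x j))))
      + (∑ j ∈ Finset.Icc 1 (m+1), g (j+1) * Real.exp (x (j+1) - x j)) * Q x z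
      + (1/2) * (∑ j ∈ Finset.Icc 1 (m+1), Q x z *
        ((g (j+1) * Real.exp (z (j+1) - x j) - 1 * Real.exp (x (j+1) - z (j+1))) ^ 2
          - (g (j+1) * Real.exp (z (j+1) - x j) + 1 * Real.exp (x (j+1) - z (j+1)))))
      - (∑ j ∈ Finset.Icc 1 (m+1), g (j+1) * Real.exp (z (j+1) - z j)) * Q x z
      = Q x z * (Real.exp (x 1 - z 1) - Real.exp (x 1 - z 1)^2)/2
        - Q x z * (Real.exp (x (m+2) - z (m+2)) - Real.exp (x (m+2) - z (m+2))^2)/2 := by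
    rw [Finset.mul_sum, Finset.sum_mul, Finset.mul_sum, Finset.sum_mul,
      ← Finset.sum_add_distrib, ← Finset.sum_add_distrib, ← Finset.sum_sub_distrib]
    have hper : ∀ j ∈ Finset.Icc 1 (m+1),
        (-(1/2) * (Q x z *
          ((1 * Real.exp (x j - z j) - g (j+1) * Real.exp (z (j+1) - x j)) ^ 2
            - (1 * Real.exp (x j - z j) + g (j+1) * Real.exp (z (j+1) - x j))))
          + g (j+1) * Real.exp (x (j+1) - x j) * Q x z
          + (1/2) * (Q x z *
          ((g (j+1) * Real.exp (z (j+1) - x j) - 1 * Real.exp (x (j+1) - z (j+1))) ^ 2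
            - (g (j+1) * Real.exp (z (j+1) - x j) + 1 * Real.exp (x (j+1) - z (j+1))))))
          - g (j+1) * Real.exp (z (j+1) - z j) * Q x z
        = (fun j => Q x z * (Real.exp (x j - z j) - Real.exp (x j - z j)^2)/2) j
          - (fun j => Q x z * (Real.exp (x j - z j) - Real.exp (x j - z j)^2)/2) (j+1) := by
      intro j hj
      exact perterm (Q x z) (Real.exp (x j - z j)) (Real.exp (x (j+1) - z (j+1)))
        (g (j+1) * Real.exp (z (j+1) - x j)) (g (j+1) * Real.exp (x (j+1) - x j))
        (g (j+1) * Real.exp (z (j+1) - z j)) (hprod1 j) (hprod2 j)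
    rw [Finset.sum_congr rfl hper,
      tele (fun j => Q x z * (Real.exp (x j - z j) - Real.exp (x j - z j)^2)/2) m]
  linear_combination hsum - Q x z * hx1 - (g 1^2/2) * Q x z * h2z
end

section
/- Let n ≥ 2, g_1 ∈ ℝ, g_2 > 0, g_3,…,g_{n+1} ∈ ℝ, and set c = g_1/√(2 g_2). Define, for x ∈ ℝ^n and z ∈ ℝ^n with z_1 < 0, Q(x,z) = ((1−e^{z_1})/(1+e^{z_1}))^{c} · exp(−(√(g_2/2)(e^{x_1+z_1} + e^{x_1−z_1}) + Σ_{i=2}^{n}(g_{i+1} e^{z_i − x_{i−1}} + e^{x_i − z_i}))). Then H^{BC_n}(x) Q = H^{I*_n}(z) Q pointwise on {z_1 < 0}, where H^{BC_n}(x) = −(1/2)Σ_{i=1}^n ∂²/∂x_i² + g_1 e^{x_1} + g_2 e^{2x_1} + Σ_{i=1}^{n−1} g_{i+2} e^{x_{i+1}−x_i}, and H^{I*_n}(z) = −(1/2)Σ_{i=1}^n ∂²/∂z_i² − c/(e^{−z_1/2} − e^{z_1/2})² + 2c(c+1)/(e^{−z_1} − e^{z_1})² + g_3 √(g_2/2)(e^{z_1+z_2}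 + e^{z_2−z_1}) + Σ_{i=2}^{n−1} g_{i+2} e^{z_{i+1}−z_i}. -/
/-! ### Auxiliary definitions -/

/-- The exponent appearing in the kernel. -/
noncomputable def st6S (g : ℕ → ℝ) (n : ℕ) (x z : ℕ → ℝ) : ℝ :=
  Real.sqrt (g 2 / 2) * (Real.exp (x 1 + z 1) + Real.exp (x 1 - z 1))
    + ∑ j ∈ Finset.Icc 2 n, (g (j + 1) * Real.exp (z j - x (j - 1)) + Real.exp (x j - z j))

/-- The kernel. -/
noncomputable def st6Q (g : ℕ → ℝ) (c : ℝ) (n : ℕ) (x z : ℕ → ℝ) : ℝ :=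
  ((1 - Real.exp (z 1)) / (1 + Real.exp (z 1))) ^ c * Real.exp (-(st6S g n x z))

noncomputable def st6Ax (g : ℕ → ℝ) (z : ℕ → ℝ) (i : ℕ) : ℝ :=
  if i = 1 then Real.sqrt (g 2 / 2) * (Real.exp (z 1) + Real.exp (-(z 1)))
  else Real.exp (-(z i))

noncomputable def st6Bx (g : ℕ → ℝ) (n : ℕ) (z : ℕ → ℝ) (i : ℕ) : ℝ :=
  if i < n then g (i + 2) * Real.exp (z (i + 1)) else 0

noncomputable def st6Az (g : ℕ → ℝ) (x : ℕ → ℝ) (i : ℕ) : ℝ :=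
  g (i + 1) * Real.exp (-(x (i - 1)))

noncomputable def st6Bz (x : ℕ → ℝ) (i : ℕ) : ℝ := Real.exp (x i)

/-- `x`-side second-derivative factor. -/
noncomputable def st6px (g : ℕ → ℝ) (n : ℕ) (x z : ℕ → ℝ) (i : ℕ) : ℝ :=
  (st6Ax g z i * Real.exp (x i) - st6Bx g n z i * Real.exp (-(x i))) ^ 2
    - (st6Ax g z i * Real.exp (x i) + st6Bx g n z i * Real.exp (-(x i)))

/-- `z`-side second-derivative factor for `i ≥ 2`. -/
noncomputable def st6pz (g : ℕ → ℝ) (x z : ℕ → ℝ) (i : ℕ) : ℝ :=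
  (st6Az g x i * Real.exp (z i) - st6Bz x i * Real.exp (-(z i))) ^ 2
    - (st6Az g x i * Real.exp (z i) + st6Bz x i * Real.exp (-(z i)))

/-- logarithmic derivative of the prefactor. -/
noncomputable def st6R (c s : ℝ) : ℝ :=
  -2 * c * Real.exp s / ((1 - Real.exp s) * (1 + Real.exp s))

/-- derivative of `st6R` in `s`. -/
noncomputable def st6Rd (c s : ℝ) : ℝ :=
  -2 * c * Real.exp s * (1 + Real.exp s * Real.exp s) /
    ((1 - Real.exp s) * (1 + Real.exp s)) ^ 2

/-- `z`-side second-derivative factor for `i = 1`. -/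
noncomputable def st6P1 (g : ℕ → ℝ) (c : ℝ) (x z : ℕ → ℝ) : ℝ :=
  st6Rd c (z 1)
    + (st6R c (z 1) - (Real.sqrt (g 2 / 2) * Real.exp (x 1) * Real.exp (z 1)
        - Real.sqrt (g 2 / 2) * Real.exp (x 1) * Real.exp (-(z 1)))) ^ 2
    - (Real.sqrt (g 2 / 2) * Real.exp (x 1) * Real.exp (z 1)
        + Real.sqrt (g 2 / 2) * Real.exp (x 1) * Real.exp (-(z 1)))

noncomputable def st6s (x z : ℕ → ℝ) (i : ℕ) : ℝ :=
  Real.exp (x i - z i) ^ 2 - Real.exp (x i - z i)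

noncomputable def st6p (g : ℕ → ℝ) (x z : ℕ → ℝ) (i : ℕ) : ℝ :=
  g (i + 2) ^ 2 * Real.exp (z (i + 1) - x i) ^ 2 - g (i + 2) * Real.exp (z (i + 1) - x i)

noncomputable def st6w (g : ℕ → ℝ) (z : ℕ → ℝ) (i : ℕ) : ℝ :=
  g (i + 2) * Real.exp (z (i + 1) - z i)

noncomputable def st6v (g : ℕ → ℝ) (x : ℕ → ℝ) (i : ℕ) : ℝ :=
  g (i + 2) * Real.exp (x (i + 1) - x i)

/-! ### Calculus lemmas -/

lemma st6_hasDerivAt_exp (A B D : ℝ) (s : ℝ) :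
    HasDerivAt (fun t : ℝ => Real.exp (-(A * Real.exp t + B * Real.exp (-t) + D)))
      (-(A * Real.exp s - B * Real.exp (-s)) *
        Real.exp (-(A * Real.exp s + B * Real.exp (-s) + D))) s := by
  have hen : HasDerivAt (fun t : ℝ => Real.exp (-t)) (-Real.exp (-s)) s := by
    exact ((Real.hasDerivAt_exp (-s)).comp s (hasDerivAt_neg s)).congr_deriv (by ring)
  have h1 : HasDerivAt (fun t : ℝ => -(A * Real.exp t + B * Real.exp (-t) + D))
      (-(A * Real.exp s - B * Real.exp (-s))) s := by
    have := ((((Real.hasDerivAt_exp s).const_mul A).add (hen.const_mul B)).add_const D).neg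
    exact this.congr_deriv (by ring)
  have h2 := (Real.hasDerivAt_exp _).comp s h1
  exact h2.congr_deriv (by ring)

lemma st6_core (A B C D : ℝ) (s : ℝ) :
    HasDerivAt (fun t : ℝ => C * Real.exp (-(A * Real.exp t + B * Real.exp (-t) + D)))
      (-(A * Real.exp s - B * Real.exp (-s)) *
        (C * Real.exp (-(A * Real.exp s + B * Real.exp (-s) + D)))) s := by
  have := (st6_hasDerivAt_exp A B D s).const_mul C
  exact this.congr_deriv (by ring)

lemma st6_deriv2 (A B C D t : ℝ) :
    deriv (deriv (fun s : ℝ => C * Real.exp (-(A * Real.exp s + B * Real.exp (-s) + D)))) t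
    = ((A * Real.exp t - B * Real.exp (-t)) ^ 2 - (A * Real.exp t + B * Real.exp (-t))) *
        (C * Real.exp (-(A * Real.exp t + B * Real.exp (-t) + D))) := by
  have hd : deriv (fun s : ℝ => C * Real.exp (-(A * Real.exp s + B * Real.exp (-s) + D)))
      = fun s => -(A * Real.exp s - B * Real.exp (-s)) *
          (C * Real.exp (-(A * Real.exp s + B * Real.exp (-s) + D))) :=
    funext fun s => (st6_core A B C D s).deriv
  rw [hd]
  have hen : HasDerivAt (fun s : ℝ => Real.exp (-s)) (-Real.exp (-t)) t := by
    exact ((Real.hasDerivAt_exp (-t)).comp t (hasDerivAt_neg t)).congr_deriv (by ring)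
  have h1 : HasDerivAt (fun s : ℝ => -(A * Real.exp s - B * Real.exp (-s)))
      (-(A * Real.exp t + B * Real.exp (-t))) t := by
    have := (((Real.hasDerivAt_exp t).const_mul A).sub (hen.const_mul B)).neg
    exact this.congr_deriv (by ring)
  have h2 := h1.mul (st6_core A B C D t)
  refine h2.deriv.trans ?_
  ring

lemma st6_z1_hasDerivAt (c A D : ℝ) (s : ℝ) (hs : s < 0) :
    HasDerivAt (fun t : ℝ => ((1 - Real.exp t) / (1 + Real.exp t)) ^ c *
        Real.exp (-(A * Real.exp t + A * Real.exp (-t) + D)))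
      ((st6R c s - (A * Real.exp s - A * Real.exp (-s))) *
        (((1 - Real.exp s) / (1 + Real.exp s)) ^ c *
          Real.exp (-(A * Real.exp s + A * Real.exp (-s) + D)))) s := by
  have hlt : Real.exp s < 1 := Real.exp_lt_one_iff.mpr hs
  have h1m : (0:ℝ) < 1 - Real.exp s := by linarith
  have h1p : (0:ℝ) < 1 + Real.exp s := by positivity
  have hPpos : 0 < (1 - Real.exp s) / (1 + Real.exp s) := by positivity
  have hnum : HasDerivAt (fun t : ℝ => 1 - Real.exp t) (-Real.exp s) s :=
    (Real.hasDerivAt_exp s).const_sub 1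
  have hden : HasDerivAt (fun t : ℝ => 1 + Real.exp t) (Real.exp s) s :=
    (Real.hasDerivAt_exp s).const_add 1
  have hPd : HasDerivAt (fun t : ℝ => (1 - Real.exp t) / (1 + Real.exp t))
      ((-Real.exp s * (1 + Real.exp s) - (1 - Real.exp s) * Real.exp s) /
        (1 + Real.exp s) ^ 2) s := hnum.div hden (ne_of_gt h1p)
  have hrpow := hPd.rpow_const (p := c) (Or.inl (ne_of_gt hPpos))
  have hexp := st6_hasDerivAt_exp A A D s
  have h := hrpow.mul hexp
  refine h.congr_deriv (Eq.symm ?_)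
  rw [Real.rpow_sub_one (ne_of_gt hPpos), st6R]
  field_simp
  ring

lemma st6_z1_deriv2 (c A D t : ℝ) (ht : t < 0) :
    deriv (deriv (fun s : ℝ => ((1 - Real.exp s) / (1 + Real.exp s)) ^ c *
        Real.exp (-(A * Real.exp s + A * Real.exp (-s) + D)))) t
    = (st6Rd c t + (st6R c t - (A * Real.exp t - A * Real.exp (-t))) ^ 2
        - (A * Real.exp t + A * Real.exp (-t))) *
      (((1 - Real.exp t) / (1 + Real.exp t)) ^ c *
        Real.exp (-(A * Real.exp t + A * Real.exp (-t) + D))) := by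
  have hev : deriv (fun s : ℝ => ((1 - Real.exp s) / (1 + Real.exp s)) ^ c *
        Real.exp (-(A * Real.exp s + A * Real.exp (-s) + D)))
      =ᶠ[nhds t] fun s => (st6R c s - (A * Real.exp s - A * Real.exp (-s))) *
        (((1 - Real.exp s) / (1 + Real.exp s)) ^ c *
          Real.exp (-(A * Real.exp s + A * Real.exp (-s) + D))) := by
    filter_upwards [Iio_mem_nhds ht] with s hs
    exact (st6_z1_hasDerivAt c A D s hs).deriv
  rw [hev.deriv_eq]
  have hlt : Real.exp t < 1 := Real.exp_lt_one_iff.mpr ht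
  have h1m : (0:ℝ) < 1 - Real.exp t := by linarith
  have h1p : (0:ℝ) < 1 + Real.exp t := by positivity
  have hDen : ((1 - Real.exp t) * (1 + Real.exp t)) ≠ 0 := by positivity
  have hen : HasDerivAt (fun s : ℝ => Real.exp (-s)) (-Real.exp (-t)) t := by
    exact ((Real.hasDerivAt_exp (-t)).comp t (hasDerivAt_neg t)).congr_deriv (by ring)
  have hnum : HasDerivAt (fun s : ℝ => -2 * c * Real.exp s) (-2 * c * Real.exp t) t :=
    (Real.hasDerivAt_exp t).const_mul _
  have hden : HasDerivAt (fun s : ℝ => (1 - Real.exp s) * (1 + Real.exp s))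
      (-Real.exp t * (1 + Real.exp t) + (1 - Real.exp t) * Real.exp t) t :=
    ((Real.hasDerivAt_exp t).const_sub 1).mul ((Real.hasDerivAt_exp t).const_add 1)
  have hR : HasDerivAt (fun s : ℝ => st6R c s)
      ((-2 * c * Real.exp t * ((1 - Real.exp t) * (1 + Real.exp t)) -
          -2 * c * Real.exp t *
            (-Real.exp t * (1 + Real.exp t) + (1 - Real.exp t) * Real.exp t)) /
        ((1 - Real.exp t) * (1 + Real.exp t)) ^ 2) t := by
    exact hnum.div hden hDen
  have hM : HasDerivAt (fun s : ℝ => A * Real.exp s - A * Real.exp (-s))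
      (A * Real.exp t + A * Real.exp (-t)) t := by
    have := ((Real.hasDerivAt_exp t).const_mul A).sub (hen.const_mul A)
    exact this.congr_deriv (by ring)
  have hG := (hR.sub hM).mul (st6_z1_hasDerivAt c A D t ht)
  refine hG.deriv.trans ?_
  simp only [Pi.sub_apply]
  rw [st6R, st6Rd]
  field_simp
  ring

/-! ### Finset lemmas -/

lemma st6_split (f : ℕ → ℝ) {m n : ℕ} (h : m ≤ n) :
    ∑ i ∈ Finset.Icc m n, f i = f m + ∑ i ∈ Finset.Icc (m + 1) n, f i := by
  rw [show Finset.Icc m n = insert m (Finset.Icc (m + 1) n) by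
        ext j; simp only [Finset.mem_Icc, Finset.mem_insert]; omega,
    Finset.sum_insert (by simp only [Finset.mem_Icc]; omega)]

lemma st6_shift (f : ℕ → ℝ) {n : ℕ} (hn : 1 ≤ n) :
    ∑ i ∈ Finset.Icc 2 n, f i = ∑ i ∈ Finset.Icc 1 (n - 1), f (i + 1) := by
  rw [show Finset.Icc 2 n = Finset.Icc (1 + 1) (n - 1 + 1) by congr 1; omega,
    ← Finset.map_add_right_Icc, Finset.sum_map]
  rfl

/-! ### Update lemmas for the exponent -/

lemma st6_Sx (g : ℕ → ℝ) (n : ℕ) (hn : 2 ≤ n) (x z : ℕ → ℝ) (i : ℕ) (hi : i ∈ Finset.Icc 1 n)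
    (t : ℝ) :
    st6S g n (Function.update x i t) z
      = st6Ax g z i * Real.exp t + st6Bx g n z i * Real.exp (-t)
        + (st6S g n x z - st6Ax g z i * Real.exp (x i) - st6Bx g n z i * Real.exp (-(x i))) := by
  obtain ⟨hi1, hi2⟩ := Finset.mem_Icc.mp hi
  unfold st6S st6Ax st6Bx
  rcases eq_or_ne i 1 with rfl | hne1
  · -- i = 1 : affected term j = 2
    have h2 : (2 : ℕ) ∈ Finset.Icc 2 n := Finset.mem_Icc.mpr ⟨le_rfl, hn⟩
    rw [← Finset.add_sum_erase _ _ h2, ← Finset.add_sum_erase _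
      (fun j => g (j + 1) * Real.exp (z j - x (j - 1)) + Real.exp (x j - z j)) h2]
    have hrest : ∑ j ∈ (Finset.Icc 2 n).erase 2,
        (g (j + 1) * Real.exp (z j - Function.update x 1 t (j - 1))
          + Real.exp (Function.update x 1 t j - z j))
        = ∑ j ∈ (Finset.Icc 2 n).erase 2,
        (g (j + 1) * Real.exp (z j - x (j - 1)) + Real.exp (x j - z j)) := by
      refine Finset.sum_congr rfl fun j hj => ?_
      obtain ⟨hj2, hj3⟩ := Finset.mem_erase.mp hj
      obtain ⟨hj4, hj5⟩ := Finset.mem_Icc.mp hj3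
      rw [Function.update_of_ne (by omega), Function.update_of_ne (by omega)]
    rw [hrest]
    rw [Function.update_self, Function.update_of_ne (by norm_num : (2:ℕ) ≠ 1)]
    rw [if_pos rfl, if_pos (by omega : 1 < n)]
    simp only [Real.exp_add, Real.exp_sub, Real.exp_neg]
    norm_num
    ring
  · rcases eq_or_ne i n with rfl | hnen
    · -- i = n : affected term j = n
      have hnmem : i ∈ Finset.Icc 2 i := Finset.mem_Icc.mpr ⟨by omega, le_rfl⟩
      rw [← Finset.add_sum_erase _ _ hnmem, ← Finset.add_sum_erase _
        (fun j => g (j + 1) * Real.exp (z j - x (j - 1)) + Real.exp (x j - z j)) hnmem]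
      have hrest : ∑ j ∈ (Finset.Icc 2 i).erase i,
          (g (j + 1) * Real.exp (z j - Function.update x i t (j - 1))
            + Real.exp (Function.update x i t j - z j))
          = ∑ j ∈ (Finset.Icc 2 i).erase i,
          (g (j + 1) * Real.exp (z j - x (j - 1)) + Real.exp (x j - z j)) := by
        refine Finset.sum_congr rfl fun j hj => ?_
        obtain ⟨hj2, hj3⟩ := Finset.mem_erase.mp hj
        obtain ⟨hj4, hj5⟩ := Finset.mem_Icc.mp hj3
        rw [Function.update_of_ne (by omega), Function.update_of_ne (by omega)]
      rw [hrest]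
      rw [Function.update_self, Function.update_of_ne (by omega : i - 1 ≠ i),
        Function.update_of_ne (by omega : (1:ℕ) ≠ i)]
      rw [if_neg hne1, if_neg (lt_irrefl i)]
      simp only [Real.exp_sub, Real.exp_neg]
      ring
    · -- 2 ≤ i < n : affected terms j = i and j = i + 1
      have himem : i ∈ Finset.Icc 2 n := Finset.mem_Icc.mpr ⟨by omega, hi2⟩
      have hi1mem : i + 1 ∈ (Finset.Icc 2 n).erase i :=
        Finset.mem_erase.mpr ⟨by omega, Finset.mem_Icc.mpr ⟨by omega, by omega⟩⟩
      rw [← Finset.add_sum_erase _ _ himem, ← Finset.add_sum_erase _ _ hi1mem,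
        ← Finset.add_sum_erase _
          (fun j => g (j + 1) * Real.exp (z j - x (j - 1)) + Real.exp (x j - z j)) himem,
        ← Finset.add_sum_erase _
          (fun j => g (j + 1) * Real.exp (z j - x (j - 1)) + Real.exp (x j - z j)) hi1mem]
      have hrest : ∑ j ∈ ((Finset.Icc 2 n).erase i).erase (i + 1),
          (g (j + 1) * Real.exp (z j - Function.update x i t (j - 1))
            + Real.exp (Function.update x i t j - z j))
          = ∑ j ∈ ((Finset.Icc 2 n).erase i).erase (i + 1),
          (g (j + 1) * Real.exp (z j - x (j - 1)) + Real.exp (x j - z j)) := by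
        refine Finset.sum_congr rfl fun j hj => ?_
        obtain ⟨hj1, hj2⟩ := Finset.mem_erase.mp hj
        obtain ⟨hj3, hj4⟩ := Finset.mem_erase.mp hj2
        obtain ⟨hj5, hj6⟩ := Finset.mem_Icc.mp hj4
        rw [Function.update_of_ne (by omega), Function.update_of_ne (by omega)]
      rw [hrest]
      rw [Function.update_self, Function.update_of_ne (by omega : i - 1 ≠ i),
        Function.update_of_ne (by omega : i + 1 ≠ i),
        show (i + 1 - 1) = i by omega, Function.update_self,
        Function.update_of_ne (by omega : (1:ℕ) ≠ i)]
      rw [if_neg hne1, if_pos (by omega : i < n)]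
      simp only [Real.exp_sub, Real.exp_neg]
      ring

lemma st6_Sz (g : ℕ → ℝ) (n : ℕ) (x z : ℕ → ℝ) (i : ℕ) (hi : i ∈ Finset.Icc 2 n) (t : ℝ) :
    st6S g n x (Function.update z i t)
      = st6Az g x i * Real.exp t + st6Bz x i * Real.exp (-t)
        + (st6S g n x z - st6Az g x i * Real.exp (z i) - st6Bz x i * Real.exp (-(z i))) := by
  obtain ⟨hi1, hi2⟩ := Finset.mem_Icc.mp hi
  unfold st6S st6Az st6Bz
  rw [← Finset.add_sum_erase _ _ hi, ← Finset.add_sum_erase _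
    (fun j => g (j + 1) * Real.exp (z j - x (j - 1)) + Real.exp (x j - z j)) hi]
  have hrest : ∑ j ∈ (Finset.Icc 2 n).erase i,
      (g (j + 1) * Real.exp (Function.update z i t j - x (j - 1))
        + Real.exp (x j - Function.update z i t j))
      = ∑ j ∈ (Finset.Icc 2 n).erase i,
      (g (j + 1) * Real.exp (z j - x (j - 1)) + Real.exp (x j - z j)) := by
    refine Finset.sum_congr rfl fun j hj => ?_
    obtain ⟨hj1, hj2⟩ := Finset.mem_erase.mp hj
    rw [Function.update_of_ne hj1]
  rw [hrest, Function.update_self, Function.update_of_ne (by omega : (1:ℕ) ≠ i)]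
  simp only [Real.exp_sub, Real.exp_neg]
  ring

lemma st6_Sz1 (g : ℕ → ℝ) (n : ℕ) (x z : ℕ → ℝ) (t : ℝ) :
    st6S g n x (Function.update z 1 t)
      = Real.sqrt (g 2 / 2) * Real.exp (x 1) * Real.exp t
        + Real.sqrt (g 2 / 2) * Real.exp (x 1) * Real.exp (-t)
        + (st6S g n x z - Real.sqrt (g 2 / 2) * Real.exp (x 1) * Real.exp (z 1)
            - Real.sqrt (g 2 / 2) * Real.exp (x 1) * Real.exp (-(z 1))) := by
  unfold st6S
  have hrest : ∑ j ∈ Finset.Icc 2 n,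
      (g (j + 1) * Real.exp (Function.update z 1 t j - x (j - 1))
        + Real.exp (x j - Function.update z 1 t j))
      = ∑ j ∈ Finset.Icc 2 n,
      (g (j + 1) * Real.exp (z j - x (j - 1)) + Real.exp (x j - z j)) := by
    refine Finset.sum_congr rfl fun j hj => ?_
    obtain ⟨hj1, hj2⟩ := Finset.mem_Icc.mp hj
    rw [Function.update_of_ne (by omega : j ≠ 1)]
  rw [hrest, Function.update_self]
  simp only [Real.exp_add, Real.exp_sub, Real.exp_neg]
  ring

/-! ### `pd2` computations -/

lemma st6_pd2x (g : ℕ → ℝ) (c : ℝ) (n : ℕ) (hn : 2 ≤ n) (x z : ℕ → ℝ) (i : ℕ)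
    (hi : i ∈ Finset.Icc 1 n) :
    pd2 (fun x' => st6Q g c n x' z) i x = st6px g n x z i * st6Q g c n x z := by
  have hfe : (fun t => st6Q g c n (Function.update x i t) z)
      = fun t => ((1 - Real.exp (z 1)) / (1 + Real.exp (z 1))) ^ c *
          Real.exp (-(st6Ax g z i * Real.exp t + st6Bx g n z i * Real.exp (-t)
            + (st6S g n x z - st6Ax g z i * Real.exp (x i)
              - st6Bx g n z i * Real.exp (-(x i))))) := by
    funext t
    unfold st6Q
    rw [st6_Sx g n hn x z i hi t]
  simp only [pd2, hfe]
  rw [st6_deriv2]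
  rw [show st6Ax g z i * Real.exp (x i) + st6Bx g n z i * Real.exp (-(x i))
      + (st6S g n x z - st6Ax g z i * Real.exp (x i) - st6Bx g n z i * Real.exp (-(x i)))
      = st6S g n x z by ring]
  rfl

lemma st6_pd2z (g : ℕ → ℝ) (c : ℝ) (n : ℕ) (x z : ℕ → ℝ) (i : ℕ)
    (hi : i ∈ Finset.Icc 2 n) :
    pd2 (fun z' => st6Q g c n x z') i z = st6pz g x z i * st6Q g c n x z := by
  obtain ⟨hi1, hi2⟩ := Finset.mem_Icc.mp hi
  have hfe : (fun t => st6Q g c n x (Function.update z i t))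
      = fun t => ((1 - Real.exp (z 1)) / (1 + Real.exp (z 1))) ^ c *
          Real.exp (-(st6Az g x i * Real.exp t + st6Bz x i * Real.exp (-t)
            + (st6S g n x z - st6Az g x i * Real.exp (z i)
              - st6Bz x i * Real.exp (-(z i))))) := by
    funext t
    unfold st6Q
    rw [st6_Sz g n x z i hi t, Function.update_of_ne (by omega : (1:ℕ) ≠ i)]
  simp only [pd2, hfe]
  rw [st6_deriv2]
  rw [show st6Az g x i * Real.exp (z i) + st6Bz x i * Real.exp (-(z i))
      + (st6S g n x z - st6Az g x i * Real.exp (z i) - st6Bz x i * Real.exp (-(z i)))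
      = st6S g n x z by ring]
  rfl

lemma st6_pd2z1 (g : ℕ → ℝ) (c : ℝ) (n : ℕ) (x z : ℕ → ℝ) (hz : z 1 < 0) :
    pd2 (fun z' => st6Q g c n x z') 1 z = st6P1 g c x z * st6Q g c n x z := by
  have hfe : (fun t => st6Q g c n x (Function.update z 1 t))
      = fun t => ((1 - Real.exp t) / (1 + Real.exp t)) ^ c *
          Real.exp (-(Real.sqrt (g 2 / 2) * Real.exp (x 1) * Real.exp t
            + Real.sqrt (g 2 / 2) * Real.exp (x 1) * Real.exp (-t)
            + (st6S g n x z - Real.sqrt (g 2 / 2) * Real.exp (x 1) * Real.exp (z 1)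
              - Real.sqrt (g 2 / 2) * Real.exp (x 1) * Real.exp (-(z 1))))) := by
    funext t
    unfold st6Q
    rw [st6_Sz1 g n x z t, Function.update_self]
  simp only [pd2, hfe]
  rw [st6_z1_deriv2 _ _ _ _ hz]
  rw [show Real.sqrt (g 2 / 2) * Real.exp (x 1) * Real.exp (z 1)
      + Real.sqrt (g 2 / 2) * Real.exp (x 1) * Real.exp (-(z 1))
      + (st6S g n x z - Real.sqrt (g 2 / 2) * Real.exp (x 1) * Real.exp (z 1)
        - Real.sqrt (g 2 / 2) * Real.exp (x 1) * Real.exp (-(z 1)))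
      = st6S g n x z by ring]
  rfl

/-! ### Sum decompositions -/

lemma st6_L1 (g : ℕ → ℝ) (n : ℕ) (hn : 2 ≤ n) (x z : ℕ → ℝ) :
    ∑ i ∈ Finset.Icc 2 n, st6px g n x z i
      = ∑ i ∈ Finset.Icc 2 n, st6s x z i
        + (∑ i ∈ Finset.Icc 2 (n - 1), st6p g x z i
            - 2 * ∑ i ∈ Finset.Icc 2 (n - 1), st6w g z i) := by
  have h : ∀ i ∈ Finset.Icc 2 n, st6px g n x z i
      = st6s x z i + (if i < n then st6p g x z i - 2 * st6w g z i else 0) := by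
    intro i hi
    obtain ⟨hi1, hi2⟩ := Finset.mem_Icc.mp hi
    unfold st6px st6s st6p st6w st6Ax st6Bx
    rw [if_neg (by omega : i ≠ 1)]
    by_cases hin : i < n
    · rw [if_pos hin, if_pos hin]
      simp only [Real.exp_sub, Real.exp_neg]
      field_simp
      ring
    · rw [if_neg hin, if_neg hin]
      simp only [Real.exp_sub, Real.exp_neg]
      field_simp
      try ring
  rw [Finset.sum_congr rfl h, Finset.sum_add_distrib]
  congr 1
  rw [← Finset.sum_filter, show (Finset.Icc 2 n).filter (· < n) = Finset.Icc 2 (n - 1) by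
      ext j; simp only [Finset.mem_Icc, Finset.mem_filter]; omega,
    Finset.sum_sub_distrib, Finset.mul_sum]

lemma st6_L2 (g : ℕ → ℝ) (n : ℕ) (hn : 2 ≤ n) (x z : ℕ → ℝ) :
    ∑ i ∈ Finset.Icc 2 n, st6pz g x z i
      = ∑ i ∈ Finset.Icc 2 n, st6s x z i
        + (∑ i ∈ Finset.Icc 1 (n - 1), st6p g x z i
            - 2 * ∑ i ∈ Finset.Icc 1 (n - 1), st6v g x i) := by
  have h : ∀ i ∈ Finset.Icc 2 n, st6pz g x z i
      = st6s x z i + (g (i + 1) ^ 2 * Real.exp (z i - x (i - 1)) ^ 2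
          - 2 * g (i + 1) * Real.exp (x i - x (i - 1))
          - g (i + 1) * Real.exp (z i - x (i - 1))) := by
    intro i hi
    unfold st6pz st6s st6Az st6Bz
    simp only [Real.exp_sub, Real.exp_neg]
    field_simp
    ring
  rw [Finset.sum_congr rfl h, Finset.sum_add_distrib]
  congr 1
  rw [st6_shift _ (by omega : 1 ≤ n)]
  have h2 : ∀ i ∈ Finset.Icc 1 (n - 1),
      (g (i + 1 + 1) ^ 2 * Real.exp (z (i + 1) - x (i + 1 - 1)) ^ 2
        - 2 * g (i + 1 + 1) * Real.exp (x (i + 1) - x (i + 1 - 1))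
        - g (i + 1 + 1) * Real.exp (z (i + 1) - x (i + 1 - 1)))
      = st6p g x z i - 2 * st6v g x i := by
    intro i hi
    unfold st6p st6v
    rw [show i + 1 - 1 = i by omega, show i + 1 + 1 = i + 2 by omega]
    ring
  rw [Finset.sum_congr rfl h2, Finset.sum_sub_distrib, Finset.mul_sum]

/-! ### The boundary identity -/

set_option maxHeartbeats 2000000 in
lemma st6_bdy (g : ℕ → ℝ) (hg2 : 0 < g 2) (c : ℝ) (hc : c = g 1 / Real.sqrt (2 * g 2))
    (n : ℕ) (hn : 2 ≤ n) (x z : ℕ → ℝ) (hz : z 1 < 0) :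
    -(1 / 2) * st6px g n x z 1 + g 1 * Real.exp (x 1) + g 2 * Real.exp (2 * x 1)
        + (1 / 2) * st6p g x z 1
      = -(1 / 2) * st6P1 g c x z
        + (-c / (Real.exp (-z 1 / 2) - Real.exp (z 1 / 2)) ^ 2
            + 2 * c * (c + 1) / (Real.exp (-z 1) - Real.exp (z 1)) ^ 2
            + g 3 * Real.sqrt (g 2 / 2) * (Real.exp (z 1 + z 2) + Real.exp (z 2 - z 1))) := by
  have ha : 0 < Real.sqrt (g 2 / 2) := Real.sqrt_pos.mpr (by linarith)
  have ha2 : Real.sqrt (g 2 / 2) ^ 2 = g 2 / 2 := Real.sq_sqrt (by linarith)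
  have h2a : Real.sqrt (2 * g 2) = 2 * Real.sqrt (g 2 / 2) := by
    rw [show 2 * g 2 = (2 * Real.sqrt (g 2 / 2)) ^ 2 by rw [mul_pow]; rw [ha2]; ring]
    exact Real.sqrt_sq (by positivity)
  have hg1 : g 1 = 2 * Real.sqrt (g 2 / 2) * c := by
    rw [hc, h2a]; field_simp
  unfold st6px st6p st6P1 st6R st6Rd st6Ax st6Bx
  rw [if_pos rfl, if_pos (by omega : 1 < n)]
  simp only [show (1:ℕ) + 2 = 3 by norm_num, show (1:ℕ) + 1 = 2 by norm_num]
  have hv : Real.exp (z 1 / 2) * Real.exp (z 1 / 2) = Real.exp (z 1) := by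
    rw [← Real.exp_add]; ring_nf
  have hvlt : Real.exp (z 1 / 2) < 1 := Real.exp_lt_one_iff.mpr (by linarith)
  have hvpos : 0 < Real.exp (z 1 / 2) := Real.exp_pos _
  rw [show -z 1 / 2 = -(z 1 / 2) by ring, show (2:ℝ) * x 1 = x 1 + x 1 by ring]
  simp only [Real.exp_neg, Real.exp_add, Real.exp_sub]
  rw [← hv]
  set a := Real.sqrt (g 2 / 2) with ha_def
  have hg2a : g 2 = 2 * a ^ 2 := by rw [ha_def]; linarith
  rw [hg1, hg2a]
  have h1m : (0:ℝ) < 1 - Real.exp (z 1 / 2) * Real.exp (z 1 / 2) := by nlinarith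
  have h1p : (0:ℝ) < 1 + Real.exp (z 1 / 2) * Real.exp (z 1 / 2) := by positivity
  have hvne : Real.exp (z 1 / 2) ≠ 0 := ne_of_gt hvpos
  have h5 : (Real.exp (z 1 / 2))⁻¹ - Real.exp (z 1 / 2) ≠ 0 := by
    have h6 : Real.exp (z 1 / 2) * ((Real.exp (z 1 / 2))⁻¹ - Real.exp (z 1 / 2))
        = 1 - Real.exp (z 1 / 2) * Real.exp (z 1 / 2) := by field_simp
    intro h
    rw [h, mul_zero] at h6
    exact (ne_of_gt h1m) h6.symm
  have h7 : (Real.exp (z 1 / 2) * Real.exp (z 1 / 2))⁻¹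
      - Real.exp (z 1 / 2) * Real.exp (z 1 / 2) ≠ 0 := by
    have h8 : (0:ℝ) < 1 - (Real.exp (z 1 / 2) * Real.exp (z 1 / 2))
        * (Real.exp (z 1 / 2) * Real.exp (z 1 / 2)) := by nlinarith
    have h6 : Real.exp (z 1 / 2) * Real.exp (z 1 / 2) *
        ((Real.exp (z 1 / 2) * Real.exp (z 1 / 2))⁻¹
          - Real.exp (z 1 / 2) * Real.exp (z 1 / 2))
        = 1 - (Real.exp (z 1 / 2) * Real.exp (z 1 / 2))
            * (Real.exp (z 1 / 2) * Real.exp (z 1 / 2)) := by field_simp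
    intro h
    rw [h, mul_zero] at h6
    exact (ne_of_gt h8) h6.symm
  have hm' : (1 : ℝ) - Real.exp (z 1 / 2) * Real.exp (z 1 / 2) ≠ 0 := ne_of_gt h1m
  have hp' : (1 : ℝ) + Real.exp (z 1 / 2) * Real.exp (z 1 / 2) ≠ 0 := ne_of_gt h1p
  have hW1 : -c / ((Real.exp (z 1 / 2))⁻¹ - Real.exp (z 1 / 2)) ^ 2
      = -c * (Real.exp (z 1 / 2) * Real.exp (z 1 / 2)) /
          (1 - Real.exp (z 1 / 2) * Real.exp (z 1 / 2)) ^ 2 := by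
    rw [div_eq_div_iff (pow_ne_zero _ h5) (pow_ne_zero _ hm')]
    field_simp
  have hW2 : 2 * c * (c + 1) /
        ((Real.exp (z 1 / 2) * Real.exp (z 1 / 2))⁻¹
          - Real.exp (z 1 / 2) * Real.exp (z 1 / 2)) ^ 2
      = 2 * c * (c + 1) * (Real.exp (z 1 / 2) * Real.exp (z 1 / 2)
            * (Real.exp (z 1 / 2) * Real.exp (z 1 / 2))) /
          ((1 - Real.exp (z 1 / 2) * Real.exp (z 1 / 2))
            * (1 + Real.exp (z 1 / 2) * Real.exp (z 1 / 2))) ^ 2 := by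
    rw [div_eq_div_iff (pow_ne_zero _ h7) (pow_ne_zero _ (mul_ne_zero hm' hp'))]
    field_simp
    ring
  rw [hW1, hW2]
  have hm2 : (1 : ℝ) - Real.exp (z 1 / 2) ^ 2 ≠ 0 := by rw [sq]; exact hm'
  have hp2 : (1 : ℝ) + Real.exp (z 1 / 2) ^ 2 ≠ 0 := by rw [sq]; exact hp'
  field_simp
  ring

/-! ### The key scalar identity -/

lemma st6_key (n : ℕ) (hn : 2 ≤ n) (g : ℕ → ℝ) (hg2 : 0 < g 2)
    (c : ℝ) (hc : c = g 1 / Real.sqrt (2 * g 2)) (x z : ℕ → ℝ) (hz : z 1 < 0) :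
    -(1 / 2) * (∑ i ∈ Finset.Icc 1 n, st6px g n x z i)
        + (g 1 * Real.exp (x 1) + g 2 * Real.exp (2 * x 1)
            + ∑ i ∈ Finset.Icc 1 (n - 1), g (i + 2) * Real.exp (x (i + 1) - x i))
      = -(1 / 2) * (st6P1 g c x z + ∑ i ∈ Finset.Icc 2 n, st6pz g x z i)
        + (-c / (Real.exp (-z 1 / 2) - Real.exp (z 1 / 2)) ^ 2
            + 2 * c * (c + 1) / (Real.exp (-z 1) - Real.exp (z 1)) ^ 2
            + g 3 * Real.sqrt (g 2 / 2) * (Real.exp (z 1 + z 2) + Real.exp (z 2 - z 1))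
            + ∑ i ∈ Finset.Icc 2 (n - 1), g (i + 2) * Real.exp (z (i + 1) - z i)) := by
  have e1 : ∑ i ∈ Finset.Icc 1 n, st6px g n x z i
      = st6px g n x z 1 + ∑ i ∈ Finset.Icc 2 n, st6px g n x z i :=
    st6_split _ (by omega)
  have e2 := st6_L1 g n hn x z
  have e3 := st6_L2 g n hn x z
  have e4 : ∑ i ∈ Finset.Icc 1 (n - 1), st6p g x z i
      = st6p g x z 1 + ∑ i ∈ Finset.Icc 2 (n - 1), st6p g x z i :=
    st6_split _ (by omega)
  have e5 : ∑ i ∈ Finset.Icc 1 (n - 1), st6v g x i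
      = st6v g x 1 + ∑ i ∈ Finset.Icc 2 (n - 1), st6v g x i :=
    st6_split _ (by omega)
  have e6 : ∑ i ∈ Finset.Icc 1 (n - 1), g (i + 2) * Real.exp (x (i + 1) - x i)
      = ∑ i ∈ Finset.Icc 1 (n - 1), st6v g x i := rfl
  have e7 : ∑ i ∈ Finset.Icc 2 (n - 1), g (i + 2) * Real.exp (z (i + 1) - z i)
      = ∑ i ∈ Finset.Icc 2 (n - 1), st6w g z i := rfl
  rw [e1, e2, e3, e4, e5, e6, e5, e7]
  have hb := st6_bdy g hg2 c hc n hn x z hz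
  linear_combination hb

/-- The kernel `Q(x,z) = ((1−e^{z_1})/(1+e^{z_1}))^c ·
exp(−(√(g_2/2)(e^{x_1+z_1}+e^{x_1−z_1}) + Σ_{i=2}^{n}(g_{i+1} e^{z_i−x_{i−1}} + e^{x_i−z_i})))`
with `c = g_1/√(2g_2)` intertwines the quadratic Hamiltonians of the `BC_n` Toda chain and the
specialized Inozemtsev `I*_n` Toda chain, pointwise on `{z_1 < 0}`. -/
theorem stmt_6 (n : ℕ) (hn : 2 ≤ n) (g : ℕ → ℝ) (hg2 : 0 < g 2)
    (c : ℝ) (hc : c = g 1 / Real.sqrt (2 * g 2)) :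
    let Q : (ℕ → ℝ) → (ℕ → ℝ) → ℝ := fun x z =>
      Real.rpow ((1 - Real.exp (z 1)) / (1 + Real.exp (z 1))) c *
      Real.exp (-(Real.sqrt (g 2 / 2) * (Real.exp (x 1 + z 1) + Real.exp (x 1 - z 1))
        + ∑ i ∈ Finset.Icc 2 n,
            (g (i + 1) * Real.exp (z i - x (i - 1)) + Real.exp (x i - z i))))
    ∀ x z : ℕ → ℝ, z 1 < 0 →
      -(1 / 2) * (∑ i ∈ Finset.Icc 1 n, pd2 (fun x' => Q x' z) i x)
          + (g 1 * Real.exp (x 1) + g 2 * Real.exp (2 * x 1)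
              + ∑ i ∈ Finset.Icc 1 (n - 1), g (i + 2) * Real.exp (x (i + 1) - x i)) * Q x z
        = -(1 / 2) * (∑ i ∈ Finset.Icc 1 n, pd2 (fun z' => Q x z') i z)
          + (-c / (Real.exp (-z 1 / 2) - Real.exp (z 1 / 2)) ^ 2
              + 2 * c * (c + 1) / (Real.exp (-z 1) - Real.exp (z 1)) ^ 2
              + g 3 * Real.sqrt (g 2 / 2) * (Real.exp (z 1 + z 2) + Real.exp (z 2 - z 1))
              + ∑ i ∈ Finset.Icc 2 (n - 1), g (i + 2) * Real.exp (z (i + 1) - z i)) * Q x z := by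
  intro Q x z hz
  have hQ : ∀ x' z' : ℕ → ℝ, Q x' z' = st6Q g c n x' z' := fun _ _ => rfl
  simp only [hQ]
  have hx : ∑ i ∈ Finset.Icc 1 n, pd2 (fun x' => st6Q g c n x' z) i x
      = (∑ i ∈ Finset.Icc 1 n, st6px g n x z i) * st6Q g c n x z := by
    rw [Finset.sum_congr rfl (fun i hi => st6_pd2x g c n hn x z i hi), ← Finset.sum_mul]
  have hzs : ∑ i ∈ Finset.Icc 1 n, pd2 (fun z' => st6Q g c n x z') i z
      = (st6P1 g c x z + ∑ i ∈ Finset.Icc 2 n, st6pz g x z i) * st6Q g c n x z := by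
    rw [st6_split _ (by omega : 1 ≤ n), st6_pd2z1 g c n x z hz,
      Finset.sum_congr rfl (fun i hi => st6_pd2z g c n x z i hi), ← Finset.sum_mul, add_mul]
  rw [hx, hzs]
  linear_combination (st6_key n hn g hg2 c hc x z hz) * st6Q g c n x z
end
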